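/- arXiv:1503.04753 — 7 statements merged into one kernel-verified Lean document; each statement's English description precedes it below -/
import Mathlib

section
/- Let G = (V,E,c) be a precedence graph whose associated inequality system x_i - x_j ≤ c_{ij}, (i,j) ∈ E, is feasible, and assume G has no self-loops. For distinct nodes u, v ∈ V and b ∈ ℝ, the following are equivalent: (a) every x ∈ ℝ^V satisfying all inequalities x_i - x_j ≤ c_{ij} for (i,j) ∈ E also satisfies x_u - x_v ≤ b; (b) there exists a simple path from u to v in G whose weight is at most b. -/
/-- `l` is a walk in edge set `E`: a nonempty list of vertices with consecutive edges. -/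
def IsWalk {V : Type*} (E : Set (V × V)) (l : List V) : Prop :=
  l ≠ [] ∧ l.Chain' (fun a b => (a, b) ∈ E)

/-- The weight of a walk: sum of edge weights along consecutive pairs (with multiplicity). -/
def walkWeight {V : Type*} (c : V → V → ℝ) (l : List V) : ℝ :=
  ((l.zip l.tail).map fun p => c p.1 p.2).sum

/-- `l` is a walk from `u` to `v`. -/
def IsWalkFrom {V : Type*} (E : Set (V × V)) (u v : V) (l : List V) : Prop :=
  IsWalk E l ∧ l.head? = some u ∧ l.getLast? = some v

/-- A closed walk: a walk with at least one edge whose first and last vertices agree. -/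
def IsClosedWalk {V : Type*} (E : Set (V × V)) (l : List V) : Prop :=
  IsWalk E l ∧ 2 ≤ l.length ∧ l.head? = l.getLast?

/-- A simple path from `u` to `v`: a walk with all traversed vertices distinct. -/
def IsPathFrom {V : Type*} (E : Set (V × V)) (u v : V) (l : List V) : Prop :=
  IsWalkFrom E u v l ∧ l.Nodup

/-- A cycle: a closed walk all of whose vertices other than the repeated endpoint are distinct. -/
def IsCycle {V : Type*} (E : Set (V × V)) (l : List V) : Prop :=
  IsClosedWalk E l ∧ l.tail.Nodup

/-- `x` satisfies the precedence relation system of `(V, E, c)`. -/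
def Satisfies {V : Type*} (E : Set (V × V)) (c : V → V → ℝ) (x : V → ℝ) : Prop :=
  ∀ e ∈ E, x e.1 - x e.2 ≤ c e.1 e.2

/-- `R` is a redundant edge set of `(V, E, c)`: every edge of `R` has a replacement path
in the reduced graph of no greater weight. -/
def IsRedundantEdgeSet {V : Type*} (E : Set (V × V)) (c : V → V → ℝ)
    (R : Set (V × V)) : Prop :=
  R ⊆ E ∧ ∀ e ∈ R, ∃ l, IsPathFrom (E \ R) e.1 e.2 l ∧ walkWeight c l ≤ c e.1 e.2

/-- `w` is the minimum weight of a walk from `i` to `j` in `(V, E, c)` (attained). -/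
def IsMinWalkWeight {V : Type*} (E : Set (V × V)) (c : V → V → ℝ) (i j : V) (w : ℝ) : Prop :=
  (∃ l, IsWalkFrom E i j l ∧ walkWeight c l = w) ∧
  ∀ l, IsWalkFrom E i j l → w ≤ walkWeight c l

/-- The relation `∼`: `i ∼ j` iff `i = j` or some zero-weight closed walk traverses both. -/
def Sim {V : Type*} (E : Set (V × V)) (c : V → V → ℝ) (i j : V) : Prop :=
  i = j ∨ ∃ l, IsClosedWalk E l ∧ walkWeight c l = 0 ∧ i ∈ l ∧ j ∈ l

section Helpers
variable {V : Type*} {E : Set (V × V)} {c : V → V → ℝ}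

lemma walkWeight_nil : walkWeight c ([] : List V) = 0 := rfl

lemma walkWeight_single (a : V) : walkWeight c [a] = 0 := rfl

lemma walkWeight_cons_cons (a b : V) (l : List V) :
    walkWeight c (a :: b :: l) = c a b + walkWeight c (b :: l) := by
  simp [walkWeight]

lemma walkWeight_append : ∀ (s : List V) (a : V) (t : List V),
    walkWeight c (s ++ a :: t) = walkWeight c (s ++ [a]) + walkWeight c (a :: t)
  | [], a, t => by simp [walkWeight_single]
  | [x], a, t => by simp [walkWeight_cons_cons, walkWeight_single]
  | x :: y :: s, a, t => by
    have := walkWeight_append (y :: s) a t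
    simp only [List.cons_append, walkWeight_cons_cons] at *
    linarith

lemma tele {x : V → ℝ} (hx : Satisfies E c x) :
    ∀ (l : List V), l.Chain' (fun a b => (a, b) ∈ E) →
      ∀ a b, l.head? = some a → l.getLast? = some b → x a - x b ≤ walkWeight c l
  | [], _, a, b, ha, _ => by simp at ha
  | [z], _, a, b, ha, hb => by
    simp at ha hb; subst ha; subst hb; simp [walkWeight_single]
  | z :: w :: l, hc, a, b, ha, hb => by
    simp only [List.head?_cons, Option.some.injEq] at ha
    subst ha
    unfold List.Chain' at hc; rw [List.isChain_cons_cons] at hc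
    have hb' : (w :: l).getLast? = some b := by
      rw [← hb]; rfl
    have ih := tele hx (w :: l) hc.2 w b rfl hb'
    have hedge := hx (z, w) hc.1
    simp at hedge
    rw [walkWeight_cons_cons]
    linarith

lemma head?_append_cons (s : List V) (a : V) (t t' : List V) :
    (s ++ a :: t).head? = (s ++ a :: t').head? := by
  cases s <;> simp

lemma not_nodup_decomp : ∀ (l : List V), ¬ l.Nodup →
    ∃ (a : V) (l1 l2 l3 : List V), l = l1 ++ a :: (l2 ++ a :: l3)
  | [], h => absurd List.nodup_nil h
  | x :: t, h => by
    rw [List.nodup_cons] at h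
    push_neg at h
    by_cases hx : x ∈ t
    · obtain ⟨s, t', rfl⟩ := List.append_of_mem hx
      exact ⟨x, [], s, t', rfl⟩
    · obtain ⟨a, l1, l2, l3, rfl⟩ := not_nodup_decomp t (h hx)
      exact ⟨a, x :: l1, l2, l3, rfl⟩

lemma closed_nonneg (x : V → ℝ) (hx : Satisfies E c x) :
    ∀ l, IsClosedWalk E l → 0 ≤ walkWeight c l := by
  rintro l ⟨⟨hne, hch⟩, _, hhl⟩
  obtain ⟨a, t, rfl⟩ := List.exists_cons_of_ne_nil hne
  have := tele hx (a :: t) hch a a rfl (by rw [← hhl]; rfl)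
  linarith

lemma walk_reduce (hcw : ∀ l, IsClosedWalk E l → 0 ≤ walkWeight c l) :
    ∀ (n : ℕ) (l : List V), l.length ≤ n → ∀ u v, IsWalkFrom E u v l →
      ∃ p, (IsWalkFrom E u v p ∧ p.Nodup) ∧ walkWeight c p ≤ walkWeight c l := by
  intro n
  induction n with
  | zero => rintro l hl u v ⟨⟨hne, _⟩, _⟩; simp [List.length_eq_zero_iff] at hl; exact absurd hl hne
  | succ n ih =>
    rintro l hl u v hw
    by_cases hnd : l.Nodup
    · exact ⟨l, ⟨hw, hnd⟩, le_refl _⟩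
    · obtain ⟨a, l1, l2, l3, rfl⟩ := not_nodup_decomp l hnd
      obtain ⟨⟨hne, hch⟩, hh, hlast⟩ := hw
      -- decompose chain
      have hch1 : (l1 ++ (a :: (l2 ++ a :: l3))).Chain' (fun a b => (a, b) ∈ E) := hch
      unfold List.Chain' at hch1; rw [List.isChain_append] at hch1
      obtain ⟨hc1, hc2, hc12⟩ := hch1
      have hc2' : ((a :: l2) ++ a :: l3).Chain' (fun a b => (a, b) ∈ E) := hc2
      unfold List.Chain' at hc2'; rw [List.isChain_append] at hc2'
      obtain ⟨hca, hcb, hcab⟩ := hc2'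
      -- the spliced walk
      have hch' : (l1 ++ a :: l3).Chain' (fun a b => (a, b) ∈ E) := by
        unfold List.Chain'; rw [List.isChain_append]
        exact ⟨hc1, hcb, fun x hx y hy => hc12 x hx y (by simpa using hy)⟩
      have hwf' : IsWalkFrom E u v (l1 ++ a :: l3) := by
        refine ⟨⟨by simp, hch'⟩, ?_, ?_⟩
        · rw [← hh]; exact head?_append_cons l1 a l3 (l2 ++ a :: l3)
        · rw [← hlast, List.getLast?_append_cons,
            List.getLast?_append_cons l1 a (l2 ++ a :: l3)]
          exact (List.getLast?_append_cons (a :: l2) a l3).symm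
      have hlen : (l1 ++ a :: l3).length ≤ n := by
        have := hl
        simp [List.length_append] at this ⊢
        omega
      -- the excised closed walk
      have hclosed : IsClosedWalk E ((a :: l2) ++ [a]) := by
        refine ⟨⟨by simp, ?_⟩, by simp, ?_⟩
        · unfold List.Chain'; rw [List.isChain_append]
          exact ⟨hca, List.isChain_singleton a, fun x hx y hy => by
            simp at hy; subst hy; exact hcab x hx a rfl⟩
        · have hg : ((a :: l2) ++ [a]).getLast? = some a :=
            (List.getLast?_append_cons (a :: l2) a []).trans rfl
          rw [hg]; rfl
      have h0 : 0 ≤ walkWeight c ((a :: l2) ++ [a]) := hcw _ hclosed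
      -- weight computation
      have hw1 : walkWeight c (l1 ++ a :: (l2 ++ a :: l3)) =
          walkWeight c (l1 ++ [a]) + walkWeight c (a :: (l2 ++ a :: l3)) :=
        walkWeight_append l1 a (l2 ++ a :: l3)
      have hw2 : walkWeight c ((a :: l2) ++ a :: l3) =
          walkWeight c ((a :: l2) ++ [a]) + walkWeight c (a :: l3) :=
        walkWeight_append (a :: l2) a l3
      have hw3 : walkWeight c (l1 ++ a :: l3) =
          walkWeight c (l1 ++ [a]) + walkWeight c (a :: l3) :=
        walkWeight_append l1 a l3
      obtain ⟨p, hp, hple⟩ := ih (l1 ++ a :: l3) hlen u v hwf'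
      refine ⟨p, hp, ?_⟩
      have : walkWeight c ((a :: l2) ++ a :: l3) = walkWeight c (a :: (l2 ++ a :: l3)) := by
        simp
      rw [hw1, ← this, hw2]
      linarith

lemma walk_extend {u i j : V} {p : List V} (hp : IsWalkFrom E u i p) (he : (i, j) ∈ E) :
    IsWalkFrom E u j (p ++ [j]) ∧ walkWeight c (p ++ [j]) = walkWeight c p + c i j := by
  obtain ⟨⟨hne, hch⟩, hh, hlast⟩ := hp
  have hwf : IsWalkFrom E u j (p ++ [j]) := by
    refine ⟨⟨by simp, ?_⟩, ?_, ?_⟩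
    · unfold List.Chain'; rw [List.isChain_append]
      refine ⟨hch, List.isChain_singleton j, fun x hx y hy => ?_⟩
      simp at hy; subst hy
      rw [hlast] at hx; simp at hx; subst hx; exact he
    · rw [← hh]; cases p; · exact absurd rfl hne
      · simp
    · simp [List.getLast?_append_cons]
  refine ⟨hwf, ?_⟩
  have hd : p.dropLast ++ [p.getLast hne] = p := List.dropLast_append_getLast hne
  have hgl : p.getLast hne = i := by
    have := List.getLast?_eq_getLast (l := p) hne
    rw [hlast] at this; exact (Option.some.injEq _ _ ▸ this.symm : _)
  rw [← hd, hgl]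
  have h := walkWeight_append (c := c) p.dropLast i [j]
  rw [walkWeight_cons_cons, walkWeight_single] at h
  rw [List.append_assoc]
  show walkWeight c (p.dropLast ++ i :: [j]) = _
  rw [h]
  ring

lemma path_self {u : V} {p : List V} (hp : IsWalkFrom E u u p ∧ p.Nodup) : p = [u] := by
  obtain ⟨⟨⟨hne, _⟩, hh, hlast⟩, hnd⟩ := hp
  obtain ⟨a, t, rfl⟩ := List.exists_cons_of_ne_nil hne
  have ha : a = u := by simpa using hh
  cases t with
  | nil => rw [ha]
  | cons w t' =>
    exfalso
    have h1 : (w :: t').getLast? = some u := by rw [← hlast]; rfl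
    have h2 : u ∈ w :: t' := by
      have h3 := List.getLast?_eq_getLast (l := w :: t') (by simp)
      rw [h1] at h3
      simp only [Option.some.injEq] at h3
      rw [h3]; exact List.getLast_mem _
    rw [List.nodup_cons] at hnd
    exact hnd.1 (ha ▸ h2)

end Helpers

theorem stmt3' {V : Type*} [Fintype V] (E : Set (V × V)) (c : V → V → ℝ)
    (hfeas : ∃ x : V → ℝ, Satisfies E c x)
    (hloop : ∀ i : V, (i, i) ∉ E)
    (u v : V) (huv : u ≠ v) (b : ℝ) :
    (∀ x : V → ℝ, Satisfies E c x → x u - x v ≤ b) ↔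
      (∃ p : List V, (IsWalkFrom E u v p ∧ p.Nodup) ∧ walkWeight c p ≤ b) := by
  classical
  obtain ⟨y, hy⟩ := hfeas
  have hcw : ∀ l, IsClosedWalk E l → 0 ≤ walkWeight c l := closed_nonneg y hy
  constructor
  · intro h
    set Reach : Set V := {i | ∃ p, IsWalkFrom E u i p ∧ p.Nodup} with hReach
    have hfin : ∀ i : V, {p : List V | IsWalkFrom E u i p ∧ p.Nodup}.Finite := by
      intro i
      have hsub : {l : List V | l.Nodup} ⊆
          Set.range (fun l : {l : List V // l.Nodup} => (l : List V)) :=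
        fun l hl => ⟨⟨l, hl⟩, rfl⟩
      exact ((Set.finite_range _).subset hsub).subset (fun p hp => hp.2)
    have hmin : ∀ i : V, ∃ w : ℝ, i ∈ Reach →
        (∃ p, (IsWalkFrom E u i p ∧ p.Nodup) ∧ walkWeight c p = w) ∧
        ∀ p, IsWalkFrom E u i p ∧ p.Nodup → w ≤ walkWeight c p := by
      intro i
      by_cases hi : i ∈ Reach
      · obtain ⟨p, hp, hple⟩ := Set.exists_min_image _ (walkWeight c) (hfin i) hi
        exact ⟨walkWeight c p, fun _ => ⟨⟨p, hp, rfl⟩, hple⟩⟩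
      · exact ⟨0, fun h' => absurd h' hi⟩
    choose d hd using hmin
    have hupath : IsWalkFrom E u u [u] ∧ ([u] : List V).Nodup :=
      ⟨⟨⟨by simp, List.isChain_singleton u⟩, rfl, rfl⟩, List.nodup_singleton u⟩
    have hu : u ∈ Reach := ⟨[u], hupath⟩
    have hdu : d u ≤ 0 := by
      have := (hd u hu).2 [u] hupath
      simpa [walkWeight_single] using this
    have hkey : ∀ i j : V, i ∈ Reach → (i, j) ∈ E → j ∈ Reach ∧ d j ≤ d i + c i j := by
      intro i j hi he
      obtain ⟨⟨p, hp, hpw⟩, _⟩ := hd i hi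
      obtain ⟨hwf, hwt⟩ := walk_extend hp.1 he
      obtain ⟨q, hq, hqle⟩ := walk_reduce hcw (p ++ [j]).length (p ++ [j]) le_rfl u j hwf
      have hj : j ∈ Reach := ⟨q, hq⟩
      refine ⟨hj, ?_⟩
      have := (hd j hj).2 q hq
      rw [hwt, hpw] at hqle
      linarith
    haveI : Nonempty (V × V) := ⟨(u, u)⟩
    set t : ℝ := min ((Finset.univ : Finset (V × V)).inf' Finset.univ_nonempty
        (fun p => c p.1 p.2 - y p.1 - d p.2)) (-b - y v - 1) with ht
    set x : V → ℝ := fun i => if i ∈ Reach then -d i else y i + t with hxdef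
    have hsat : Satisfies E c x := by
      rintro ⟨i, j⟩ he
      show x i - x j ≤ c i j
      by_cases hi : i ∈ Reach
      · obtain ⟨hj, hdj⟩ := hkey i j hi he
        have h1 : x i = -d i := by simp [hxdef, hi]
        have h2 : x j = -d j := by simp [hxdef, hj]
        rw [h1, h2]; linarith
      · by_cases hj : j ∈ Reach
        · have ht2 : t ≤ c i j - y i - d j :=
            le_trans (min_le_left _ _) (Finset.inf'_le _ (Finset.mem_univ (i, j)))
          have h1 : x i = y i + t := by simp [hxdef, hi]
          have h2 : x j = -d j := by simp [hxdef, hj]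
          rw [h1, h2]; linarith
        · have hyij : y i - y j ≤ c i j := hy (i, j) he
          have h1 : x i = y i + t := by simp [hxdef, hi]
          have h2 : x j = y j + t := by simp [hxdef, hj]
          rw [h1, h2]; linarith
    have hb := h x hsat
    have hxu : x u = -d u := by simp [hxdef, hu]
    by_cases hv : v ∈ Reach
    · obtain ⟨⟨p, hp, hpw⟩, _⟩ := hd v hv
      refine ⟨p, hp, ?_⟩
      have hxv : x v = -d v := by simp [hxdef, hv]
      rw [hxu, hxv] at hb
      rw [hpw]
      linarith
    · exfalso
      have hxv : x v = y v + t := by simp [hxdef, hv]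
      have ht3 : t ≤ -b - y v - 1 := min_le_right _ _
      rw [hxu, hxv] at hb
      linarith
  · rintro ⟨p, ⟨⟨hw, hh, hl⟩, _⟩, hpb⟩ x hx
    have := tele hx p hw.2 u v hh hl
    linarith


theorem stmt3 {V : Type*} [Fintype V] (E : Set (V × V)) (c : V → V → ℝ)
    (hfeas : ∃ x : V → ℝ, Satisfies E c x)
    (hloop : ∀ i : V, (i, i) ∉ E)
    (u v : V) (huv : u ≠ v) (b : ℝ) :
    (∀ x : V → ℝ, Satisfies E c x → x u - x v ≤ b) ↔
      (∃ p : List V, IsPathFrom E u v p ∧ walkWeight c p ≤ b) :=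
  stmt3' E c hfeas hloop u v huv b
end

section
/- Let G = (V,E,c) be an edge-weighted directed graph in which every cycle has strictly positive weight. Then the maximum-cardinality redundant edge set of G is unique, and if G has at least one redundant edge, the maximum redundant edge set equals the set of all redundant edges of G. -/
/-- `R` is a maximum-cardinality redundant edge set of `(V, E, c)`. -/
def IsMaxRedundantEdgeSet {V : Type*} (E : Set (V × V)) (c : V → V → ℝ)
    (R : Set (V × V)) : Prop :=
  IsRedundantEdgeSet E c R ∧
    ∀ R' : Set (V × V), IsRedundantEdgeSet E c R' → R'.ncard ≤ R.ncard

namespace StmtAux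

variable {V : Type*}

lemma ww_single (c : V → V → ℝ) (a : V) : walkWeight c [a] = 0 := rfl

lemma ww_pair (c : V → V → ℝ) (a b : V) : walkWeight c [a, b] = c a b := by
  simp [walkWeight]

lemma ww_cons_cons (c : V → V → ℝ) (a b : V) (l : List V) :
    walkWeight c (a :: b :: l) = c a b + walkWeight c (b :: l) := by
  simp [walkWeight]

lemma ww_append (c : V → V → ℝ) (a : V) : ∀ (l₁ l₂ : List V),
    walkWeight c (l₁ ++ a :: l₂) = walkWeight c (l₁ ++ [a]) + walkWeight c (a :: l₂)
  | [], l₂ => by simp [ww_single]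
  | [x], l₂ => by simp [ww_cons_cons, ww_single]
  | x :: y :: l₁, l₂ => by
      have := ww_append c a (y :: l₁) l₂
      simp only [List.cons_append, ww_cons_cons] at *
      linarith

lemma chain'_iff_edges {R : V → V → Prop} : ∀ (l : List V),
    l.Chain' R ↔ ∀ p ∈ l.zip l.tail, R p.1 p.2
  | [] => by simp [List.Chain', List.isChain_nil]
  | [a] => by simp [List.Chain', List.isChain_singleton]
  | a :: b :: l => by
      show List.IsChain R (a :: b :: l) ↔ _
      rw [List.isChain_cons_cons, show List.IsChain R (b :: l) ↔ _ from chain'_iff_edges (b :: l)]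
      simp [List.forall_mem_cons]

lemma edges_decomp {a b : V} : ∀ {l : List V}, (a, b) ∈ l.zip l.tail →
    ∃ l₁ l₂, l = l₁ ++ a :: b :: l₂
  | [], h => by simp at h
  | [x], h => by simp at h
  | x :: y :: l, h => by
      rcases (by simpa using h : (a = x ∧ b = y) ∨ (a, b) ∈ (y :: l).zip l) with ⟨h1, h2⟩ | h'
      · subst h1; subst h2; exact ⟨[], l, rfl⟩
      · obtain ⟨l₁, l₂, hl⟩ := edges_decomp (l := y :: l) (by simpa using h')
        exact ⟨x :: l₁, l₂, by rw [List.cons_append, ← hl]⟩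

lemma edges_mem : ∀ (l₁ : List V) (l₂ : List V) (a b : V),
    (a, b) ∈ ((l₁ ++ a :: b :: l₂).zip (l₁ ++ a :: b :: l₂).tail)
  | [], l₂, a, b => by simp
  | [x], l₂, a, b => by simp
  | x :: y :: l₁, l₂, a, b => by
      have := edges_mem (y :: l₁) l₂ a b
      simp only [List.cons_append, List.tail_cons, List.zip_cons_cons] at *
      exact List.mem_cons_of_mem _ this

lemma edges_iff_infix {a b : V} {l : List V} :
    (a, b) ∈ l.zip l.tail ↔ [a, b] <:+: l := by
  constructor
  · intro h
    obtain ⟨l₁, l₂, rfl⟩ := edges_decomp h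
    exact ⟨l₁, l₂, by simp⟩
  · rintro ⟨s, t, rfl⟩
    have := edges_mem s t a b
    simpa using this

lemma getLast?_decomp {l : List V} {a : V} (h : l.getLast? = some a) :
    ∃ l', l = l' ++ [a] := by
  cases l with
  | nil => simp at h
  | cons x t =>
      refine ⟨(x :: t).dropLast, ?_⟩
      have h2 : (x :: t).getLast (by simp) = a := by
        rwa [List.getLast?_eq_getLast_of_ne_nil (by simp), Option.some_inj] at h
      rw [← h2]
      exact (List.dropLast_append_getLast _).symm

lemma ww_concat (c : V → V → ℝ) {l : List V} {v : V} (h : l.getLast? = some v) (b : V) :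
    walkWeight c (l ++ [b]) = walkWeight c l + c v b := by
  obtain ⟨l', rfl⟩ := getLast?_decomp h
  have : l' ++ [v] ++ [b] = l' ++ v :: [b] := by simp
  rw [this, ww_append c v l' [b], ww_pair]

lemma walk_mono {E₁ E₂ : Set (V × V)} (h : E₁ ⊆ E₂) {l : List V} (hw : IsWalk E₁ l) :
    IsWalk E₂ l :=
  ⟨hw.1, hw.2.imp fun _ _ hab => h hab⟩

lemma walkfrom_mono {E₁ E₂ : Set (V × V)} (h : E₁ ⊆ E₂) {u v : V} {l : List V}
    (hw : IsWalkFrom E₁ u v l) : IsWalkFrom E₂ u v l :=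
  ⟨walk_mono h hw.1, hw.2.1, hw.2.2⟩

lemma walk_of_edges {E₂ : Set (V × V)} {l : List V} (hne : l ≠ [])
    (h : ∀ p ∈ l.zip l.tail, p ∈ E₂) : IsWalk E₂ l :=
  ⟨hne, (chain'_iff_edges l).2 h⟩

lemma walk_edges {E₁ : Set (V × V)} {l : List V} (hw : IsWalk E₁ l) :
    ∀ p ∈ l.zip l.tail, p ∈ E₁ := (chain'_iff_edges l).1 hw.2

/-- Concatenation of walks. -/
lemma walk_trans (c : V → V → ℝ) {E' : Set (V × V)} {u v w : V} {l₁ l₂ : List V}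
    (h₁ : IsWalkFrom E' u v l₁) (h₂ : IsWalkFrom E' v w l₂) :
    IsWalkFrom E' u w (l₁ ++ l₂.tail) ∧
      walkWeight c (l₁ ++ l₂.tail) = walkWeight c l₁ + walkWeight c l₂ := by
  obtain ⟨⟨hne₁, hc₁⟩, hh₁, hl₁⟩ := h₁
  obtain ⟨⟨hne₂, hc₂⟩, hh₂, hl₂⟩ := h₂
  obtain ⟨t, rfl⟩ : ∃ t, l₂ = v :: t := by
    cases l₂ with
    | nil => simp at hh₂
    | cons z t =>
        simp only [List.head?_cons, Option.some_inj] at hh₂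
        subst hh₂; exact ⟨t, rfl⟩
  cases t with
  | nil =>
      have hvw : v = w := by simpa using hl₂
      subst hvw
      exact ⟨⟨⟨by simpa using hne₁, by simpa using hc₁⟩, by simpa using hh₁,
        by simpa using hl₁⟩, by simp [ww_single]⟩
  | cons b t' =>
      have hvb : (v, b) ∈ E' := (List.isChain_cons_cons.1 hc₂).1
      have hcb : List.Chain' (fun a b => (a, b) ∈ E') (b :: t') := (List.isChain_cons_cons.1 hc₂).2
      have hchain : List.Chain' (fun a b => (a, b) ∈ E') (l₁ ++ b :: t') :=
        List.isChain_split.2 ⟨List.isChain_append.2 ⟨hc₁, List.isChain_singleton b, by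
          intro x hx y hy
          simp only [List.head?_cons, Option.mem_def, Option.some_inj] at hy
          subst hy
          rw [hl₁] at hx
          simp only [Option.mem_def, Option.some_inj] at hx
          subst hx
          exact hvb⟩, hcb⟩
      have hh : (l₁ ++ b :: t').head? = some u := by
        cases l₁ with
        | nil => exact absurd rfl hne₁
        | cons x r => simpa using hh₁
      have hgl : (l₁ ++ b :: t').getLast? = some w := by
        rw [List.getLast?_append_of_ne_nil _ (by simp)]
        simpa using hl₂
      refine ⟨⟨⟨by simp, hchain⟩, hh, hgl⟩, ?_⟩
      have e1 := ww_append c b l₁ t'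
      have e2 := ww_concat c hl₁ b
      have e3 := ww_cons_cons c v b t'
      simp only [List.tail_cons]
      linarith

lemma not_nodup_decomp : ∀ (l : List V), ¬ l.Nodup →
    ∃ (y : V) (t₁ t₂ t₃ : List V), l = t₁ ++ y :: (t₂ ++ y :: t₃)
  | [], h => absurd List.nodup_nil h
  | a :: t, h => by
      by_cases ha : a ∈ t
      · obtain ⟨s₁, s₂, rfl⟩ := List.append_of_mem ha
        exact ⟨a, [], s₁, s₂, by simp⟩
      · have hnt : ¬ t.Nodup := fun hn => h (List.nodup_cons.2 ⟨ha, hn⟩)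
        obtain ⟨y, t₁, t₂, t₃, rfl⟩ := not_nodup_decomp t hnt
        exact ⟨y, a :: t₁, t₂, t₃, rfl⟩

/-- Removing a closed detour from a walk. -/
lemma surgery (c : V → V → ℝ) {E' : Set (V × V)} {t₁ t₂ t₃ : List V} {y : V}
    (h : List.Chain' (fun a b => (a, b) ∈ E') (t₁ ++ y :: (t₂ ++ y :: t₃))) :
    List.Chain' (fun a b => (a, b) ∈ E') (t₁ ++ y :: t₃) ∧
    List.Chain' (fun a b => (a, b) ∈ E') (y :: (t₂ ++ [y])) ∧
    (t₁ ++ y :: t₃).head? = (t₁ ++ y :: (t₂ ++ y :: t₃)).head? ∧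
    (t₁ ++ y :: t₃).getLast? = (t₁ ++ y :: (t₂ ++ y :: t₃)).getLast? ∧
    walkWeight c (t₁ ++ y :: (t₂ ++ y :: t₃))
      = walkWeight c (t₁ ++ y :: t₃) + walkWeight c (y :: (t₂ ++ [y])) := by
  have hs1 := List.isChain_split.1 h
  have hs2 := (List.isChain_split (l₁ := y :: t₂) (l₂ := t₃)).1 (by
    simpa [List.Chain'] using hs1.2 : List.Chain' (fun a b => (a, b) ∈ E') ((y :: t₂) ++ y :: t₃))
  refine ⟨List.isChain_split.2 ⟨hs1.1, hs2.2⟩, by simpa [List.Chain'] using hs2.1, ?_, ?_, ?_⟩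
  · cases t₁ <;> simp
  · rw [List.getLast?_append_of_ne_nil _ (by simp : (y :: t₃ : List V) ≠ [])]
    have : t₁ ++ y :: (t₂ ++ y :: t₃) = (t₁ ++ y :: t₂) ++ y :: t₃ := by simp
    rw [this, List.getLast?_append_of_ne_nil _ (by simp : (y :: t₃ : List V) ≠ [])]
  · have e1 := ww_append c y t₁ (t₂ ++ y :: t₃)
    have e2 := ww_append c y (y :: t₂) t₃
    have e3 := ww_append c y t₁ t₃
    have e4 : (y :: t₂) ++ y :: t₃ = y :: (t₂ ++ y :: t₃) := by simp
    rw [e4] at e2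
    have e5 : (y :: t₂) ++ [y] = y :: (t₂ ++ [y]) := by simp
    rw [e5] at e2
    linarith

lemma closed_pos {E : Set (V × V)} (c : V → V → ℝ)
    (hpos : ∀ l : List V, IsCycle E l → 0 < walkWeight c l) :
    ∀ (n : ℕ) (l : List V), l.length ≤ n → IsWalk E l → l.head? = l.getLast? →
      2 ≤ l.length → 0 < walkWeight c l := by
  intro n
  induction n with
  | zero => intro l h _ _ h2; omega
  | succ n ih =>
    intro l hlen hw hcl h2
    by_cases hnd : l.tail.Nodup
    · exact hpos l ⟨⟨hw, h2, hcl⟩, hnd⟩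
    · obtain ⟨x, t, rfl⟩ : ∃ x t, l = x :: t := by
        cases l with
        | nil => simp at h2
        | cons x t => exact ⟨x, t, rfl⟩
      obtain ⟨y, t₁, t₂, t₃, ht⟩ := not_nodup_decomp t (by simpa using hnd)
      subst ht
      have hl : x :: (t₁ ++ y :: (t₂ ++ y :: t₃)) = (x :: t₁) ++ y :: (t₂ ++ y :: t₃) := by
        simp
      rw [hl] at hw hcl hlen h2 ⊢
      obtain ⟨hc1, hc2, hh, hgl, hww⟩ := surgery c (t₁ := x :: t₁) hw.2
      have hmlen : (y :: (t₂ ++ [y])).length = t₂.length + 2 := by simp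
      have hmpos : 0 < walkWeight c (y :: (t₂ ++ [y])) := by
        refine ih (y :: (t₂ ++ [y])) ?_ ⟨by simp, hc2⟩ ?_ (by simp [hmlen])
        · simp only [List.length_append, List.length_cons, List.length_nil] at hlen ⊢
          omega
        · rw [show (y :: (t₂ ++ [y])) = (y :: t₂) ++ [y] by simp,
            List.getLast?_append_of_ne_nil _ (by simp)]
          simp
      have hopos : 0 < walkWeight c ((x :: t₁) ++ y :: t₃) := by
        refine ih ((x :: t₁) ++ y :: t₃) ?_ ⟨by simp, hc1⟩ ?_ ?_
        · simp only [List.length_append, List.length_cons, List.length_nil] at hlen ⊢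
          omega
        · rw [hh, hgl, hcl]
        · simp only [List.length_append, List.length_cons]
          omega
      linarith

lemma shortcut {E : Set (V × V)} (c : V → V → ℝ)
    (hpos : ∀ l : List V, IsCycle E l → 0 < walkWeight c l)
    {E' : Set (V × V)} (hE' : E' ⊆ E) :
    ∀ (n : ℕ) (l : List V), l.length ≤ n → IsWalk E' l →
      ∃ s, IsWalk E' s ∧ s.head? = l.head? ∧ s.getLast? = l.getLast? ∧ s.Nodup ∧
        walkWeight c s ≤ walkWeight c l ∧
        (¬ l.Nodup → walkWeight c s < walkWeight c l) := by
  intro n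
  induction n with
  | zero =>
      intro l hl hw
      exact absurd (List.length_eq_zero_iff.1 (Nat.le_zero.1 hl)) hw.1
  | succ n ih =>
    intro l hlen hw
    by_cases hnd : l.Nodup
    · exact ⟨l, hw, rfl, rfl, hnd, le_refl _, fun h => absurd hnd h⟩
    · obtain ⟨y, t₁, t₂, t₃, rfl⟩ := not_nodup_decomp l hnd
      obtain ⟨hc1, hc2, hh, hgl, hww⟩ := surgery c hw.2
      have hmpos : 0 < walkWeight c (y :: (t₂ ++ [y])) := by
        refine closed_pos c hpos (t₂.length + 2) _ (by simp)
          (walk_mono hE' ⟨by simp, hc2⟩) ?_ (by simp)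
        rw [show (y :: (t₂ ++ [y])) = (y :: t₂) ++ [y] by simp,
          List.getLast?_append_of_ne_nil _ (by simp)]
        simp
      obtain ⟨s, hs, hsh, hsl, hsnd, hsle, _⟩ := ih (t₁ ++ y :: t₃) (by
          simp only [List.length_append, List.length_cons, List.length_nil] at hlen ⊢
          omega) ⟨by simp, hc1⟩
      exact ⟨s, hs, hsh.trans hh, hsl.trans hgl, hsnd, by linarith, fun _ => by linarith⟩

lemma splice (c : V → V → ℝ) {E' : Set (V × V)} {p₁ p₂ Q : List V} {a b : V}
    (hP : List.Chain' (fun x y => (x, y) ∈ E') (p₁ ++ a :: b :: p₂))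
    (hQc : List.Chain' (fun x y => (x, y) ∈ E') Q)
    (hQh : Q.head? = some a) (hQl : Q.getLast? = some b) :
    List.Chain' (fun x y => (x, y) ∈ E') (p₁ ++ (Q ++ p₂)) ∧
    (p₁ ++ (Q ++ p₂)).head? = (p₁ ++ a :: b :: p₂).head? ∧
    (p₁ ++ (Q ++ p₂)).getLast? = (p₁ ++ a :: b :: p₂).getLast? ∧
    walkWeight c (p₁ ++ (Q ++ p₂)) + c a b
      = walkWeight c (p₁ ++ a :: b :: p₂) + walkWeight c Q := by
  obtain ⟨t, rfl⟩ : ∃ t, Q = a :: t := by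
    cases Q with
    | nil => simp at hQh
    | cons z t =>
        simp only [List.head?_cons, Option.some_inj] at hQh
        subst hQh; exact ⟨t, rfl⟩
  have hs1 := List.isChain_split.1 hP
  have hab : (a, b) ∈ E' := (List.isChain_cons_cons.1 hs1.2).1
  have hbp : List.Chain' (fun x y => (x, y) ∈ E') (b :: p₂) := (List.isChain_cons_cons.1 hs1.2).2
  refine ⟨?_, ?_, ?_, ?_⟩
  · have hrw : p₁ ++ ((a :: t) ++ p₂) = p₁ ++ a :: (t ++ p₂) := by simp
    rw [hrw]
    refine List.isChain_split.2 ⟨hs1.1, ?_⟩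
    rw [show a :: (t ++ p₂) = (a :: t) ++ p₂ from rfl]
    refine List.isChain_append.2 ⟨hQc, hbp.tail, ?_⟩
    intro x hx y hy
    rw [hQl] at hx
    simp only [Option.mem_def, Option.some_inj] at hx
    subst hx
    cases p₂ with
    | nil => simp at hy
    | cons z p₂' =>
        simp only [List.head?_cons, Option.mem_def, Option.some_inj] at hy
        subst hy
        exact (List.isChain_cons_cons.1 hbp).1
  · cases p₁ <;> simp
  · cases p₂ with
    | nil =>
        rw [List.append_nil, List.getLast?_append_of_ne_nil _ (by simp : (a :: t) ≠ []),
          List.getLast?_append_of_ne_nil _ (by simp : (a :: b :: []) ≠ []), hQl]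
        simp
    | cons z p₂' =>
        rw [show (a :: t) ++ z :: p₂' = (a :: t) ++ z :: p₂' from rfl, ← List.append_assoc,
          List.getLast?_append_of_ne_nil _ (by simp : (z :: p₂') ≠ []),
          List.getLast?_append_of_ne_nil _ (by simp : (a :: b :: z :: p₂') ≠ [])]
        simp
  · have e1 := ww_append c a p₁ (t ++ p₂)
    have e2 := ww_append c a p₁ (b :: p₂)
    have e3 := ww_cons_cons c a b p₂
    cases p₂ with
    | nil =>
        simp only [List.append_nil, List.cons_append] at *
        rw [ww_single] at e3
        linarith
    | cons z p₂' =>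
        have e4 := ww_append c z (a :: t) p₂'
        have e5 := ww_concat c hQl z
        have e6 := ww_cons_cons c b z p₂'
        simp only [List.cons_append, List.append_assoc] at *
        linarith

lemma walkfrom_decomp (c : V → V → ℝ) {E' : Set (V × V)} {u v a : V} {l₁ l₂ : List V}
    (h : IsWalkFrom E' u v (l₁ ++ a :: l₂)) :
    IsWalkFrom E' u a (l₁ ++ [a]) ∧ IsWalkFrom E' a v (a :: l₂) ∧
    walkWeight c (l₁ ++ a :: l₂) = walkWeight c (l₁ ++ [a]) + walkWeight c (a :: l₂) := by
  obtain ⟨⟨hne, hc⟩, hh, hl⟩ := h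
  have hs := List.isChain_split.1 hc
  refine ⟨⟨⟨by simp, hs.1⟩, ?_, ?_⟩, ⟨⟨by simp, hs.2⟩, by simp, ?_⟩, ww_append c a l₁ l₂⟩
  · cases l₁ with
    | nil => simpa using hh
    | cons x r => simpa using hh
  · rw [List.getLast?_append_of_ne_nil _ (by simp : ([a] : List V) ≠ [])]
    simp
  · rw [← hl, List.getLast?_append_of_ne_nil _ (by simp : (a :: l₂) ≠ [])]

lemma closed_nonneg {E : Set (V × V)} (c : V → V → ℝ)
    (hpos : ∀ l : List V, IsCycle E l → 0 < walkWeight c l) {Z : List V} {x : V}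
    (h : IsWalkFrom E x x Z) :
    0 ≤ walkWeight c Z ∧ (2 ≤ Z.length → 0 < walkWeight c Z) := by
  rcases Nat.lt_or_ge Z.length 2 with h2 | h2
  · obtain ⟨z, t, rfl⟩ : ∃ z t, Z = z :: t := by
      cases Z with
      | nil => exact absurd rfl h.1.1
      | cons z t => exact ⟨z, t, rfl⟩
    cases t with
    | nil => exact ⟨le_of_eq (ww_single c z).symm, fun hh => by simp at hh⟩
    | cons w t' => simp at h2
  · have := closed_pos c hpos Z.length Z le_rfl h.1 (h.2.1.trans h.2.2.symm) h2
    exact ⟨le_of_lt this, fun _ => this⟩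

lemma no_mutual {E : Set (V × V)} (c : V → V → ℝ)
    (hpos : ∀ l : List V, IsCycle E l → 0 < walkWeight c l) {e f : V × V} {P Q : List V}
    (hP : IsWalkFrom (E \ {e}) e.1 e.2 P) (hwP : walkWeight c P ≤ c e.1 e.2)
    (hfP : f ∈ P.zip P.tail)
    (hQ : IsWalkFrom (E \ {f}) f.1 f.2 Q) (hwQ : walkWeight c Q ≤ c f.1 f.2)
    (heQ : e ∈ Q.zip Q.tail) : False := by
  obtain ⟨u, v⟩ := e
  obtain ⟨a, b⟩ := f
  simp only at hP hwP hQ hwQ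
  have hmem := walk_edges hP.1 _ hfP
  have hne : (a, b) ≠ (u, v) := fun hEq => hmem.2 (by simp [hEq])
  obtain ⟨p₁, p₂, rfl⟩ := edges_decomp hfP
  obtain ⟨q₁, q₂, rfl⟩ := edges_decomp heQ
  have hPE : IsWalkFrom E u v (p₁ ++ a :: b :: p₂) := walkfrom_mono Set.diff_subset hP
  have hQE : IsWalkFrom E a b (q₁ ++ u :: v :: q₂) := walkfrom_mono Set.diff_subset hQ
  obtain ⟨W1, W2, eP1⟩ := walkfrom_decomp c hPE
  obtain ⟨V1, V2, eQ1⟩ := walkfrom_decomp c hQE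
  have eP2 := ww_cons_cons c a b p₂
  have eQ2 := ww_cons_cons c u v q₂
  have W2' : IsWalkFrom E b v (b :: p₂) :=
    ⟨⟨by simp, (List.isChain_cons_cons.1 W2.1.2).2⟩, rfl, by simpa using W2.2.2⟩
  have V2' : IsWalkFrom E v b (v :: q₂) :=
    ⟨⟨by simp, (List.isChain_cons_cons.1 V2.1.2).2⟩, rfl, by simpa using V2.2.2⟩
  obtain ⟨hZ1, eZ1⟩ := walk_trans c W1 V1
  obtain ⟨hZ2, eZ2⟩ := walk_trans c V2' W2'
  obtain ⟨hZ1nn, hZ1pos⟩ := closed_nonneg c hpos hZ1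
  obtain ⟨hZ2nn, hZ2pos⟩ := closed_nonneg c hpos hZ2
  have hsum : walkWeight c ((p₁ ++ [a]) ++ (q₁ ++ [u]).tail)
      + walkWeight c ((v :: q₂) ++ (b :: p₂).tail) ≤ 0 := by
    rw [eZ1, eZ2]
    have h1 : walkWeight c (p₁ ++ a :: b :: p₂)
        = walkWeight c (p₁ ++ [a]) + c a b + walkWeight c (b :: p₂) := by
      rw [eP1, eP2]; ring
    have h2 : walkWeight c (q₁ ++ u :: v :: q₂)
        = walkWeight c (q₁ ++ [u]) + c u v + walkWeight c (v :: q₂) := by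
      rw [eQ1, eQ2]; ring
    rw [h1] at hwP
    rw [h2] at hwQ
    linarith
  have hZ1z : ¬ (2 ≤ ((p₁ ++ [a]) ++ (q₁ ++ [u]).tail).length) := fun hlen => by
    have := hZ1pos hlen
    linarith
  have hZ2z : ¬ (2 ≤ ((v :: q₂) ++ (b :: p₂).tail).length) := fun hlen => by
    have := hZ2pos hlen
    linarith
  simp only [List.length_append, List.length_cons, List.length_tail, List.length_append,
    not_le] at hZ1z hZ2z
  have hp₁ : p₁ = [] := List.length_eq_zero_iff.1 (by omega)
  have hq₁ : q₁ = [] := List.length_eq_zero_iff.1 (by omega)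
  have hp₂ : p₂ = [] := List.length_eq_zero_iff.1 (by omega)
  have hq₂ : q₂ = [] := List.length_eq_zero_iff.1 (by omega)
  subst hp₁; subst hp₂
  have hau : a = u := by simpa using hP.2.1
  have hbv : b = v := by simpa using hP.2.2
  exact hne (by rw [hau, hbv])



def RedSet (E : Set (V × V)) (c : V → V → ℝ) : Set (V × V) :=
  {e | IsRedundantEdgeSet E c {e}}

def WW (E : Set (V × V)) (c : V → V → ℝ) (e : V × V) (l : List V) : Prop :=
  IsWalkFrom (E \ {e}) e.1 e.2 l ∧ walkWeight c l ≤ c e.1 e.2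

def Good (E : Set (V × V)) (c : V → V → ℝ) (e : V × V) : Prop :=
  ∃ l, IsPathFrom (E \ RedSet E c) e.1 e.2 l ∧ walkWeight c l ≤ c e.1 e.2

def Bad (E : Set (V × V)) (c : V → V → ℝ) (e : V × V) : Prop :=
  e ∈ RedSet E c ∧ ¬ Good E c e

def MW (E : Set (V × V)) (c : V → V → ℝ) (e : V × V) (l : List V) : Prop :=
  WW E c e l ∧ l.Nodup ∧
    ∀ l', WW E c e l' → l'.Nodup → walkWeight c l ≤ walkWeight c l'

def Prec (E : Set (V × V)) (c : V → V → ℝ) (f e : V × V) : Prop :=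
  Bad E c f ∧ ∃ l, MW E c e l ∧ f ∈ l.zip l.tail

lemma mem_red_iff {E : Set (V × V)} {c : V → V → ℝ} {e : V × V} :
    e ∈ RedSet E c ↔ e ∈ E ∧
      ∃ l, IsPathFrom (E \ {e}) e.1 e.2 l ∧ walkWeight c l ≤ c e.1 e.2 := by
  simp [RedSet, IsRedundantEdgeSet]

lemma exists_mw [Fintype V] {E : Set (V × V)} {c : V → V → ℝ} {e : V × V}
    (he : e ∈ RedSet E c) : ∃ l, MW E c e l := by
  obtain ⟨heE, l₀, hl₀, hw₀⟩ := mem_red_iff.1 he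
  have hfin : {l : List V | WW E c e l ∧ l.Nodup}.Finite := by
    apply (List.finite_length_le V (Fintype.card V)).subset
    intro l hl
    exact hl.2.length_le_card
  have hne : {l : List V | WW E c e l ∧ l.Nodup}.Nonempty :=
    ⟨l₀, ⟨hl₀.1, hw₀⟩, hl₀.2⟩
  obtain ⟨l, hl, hmin⟩ := Set.exists_min_image _ (walkWeight c) hfin hne
  exact ⟨l, hl.1, hl.2, fun l' h1 h2 => hmin l' ⟨h1, h2⟩⟩

lemma replace_good (E : Set (V × V)) (c : V → V → ℝ) :
    ∀ (n : ℕ) (l : List V) (x y : V), l.length ≤ n → IsWalkFrom E x y l →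
      (∀ p ∈ l.zip l.tail, p ∈ RedSet E c → Good E c p) →
      ∃ s, IsWalkFrom (E \ RedSet E c) x y s ∧ walkWeight c s ≤ walkWeight c l := by
  intro n
  induction n with
  | zero =>
      intro l x y hl hw _
      exact absurd (List.length_eq_zero_iff.1 (Nat.le_zero.1 hl)) hw.1.1
  | succ n ih =>
    intro l x y hlen hw hgood
    obtain ⟨z, t, rfl⟩ : ∃ z t, l = z :: t := by
      cases l with
      | nil => exact absurd rfl hw.1.1
      | cons z t => exact ⟨z, t, rfl⟩
    have hx : z = x := by simpa using hw.2.1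
    subst hx
    cases t with
    | nil =>
        exact ⟨[z], ⟨⟨by simp, List.isChain_singleton z⟩, by simp, by simpa using hw.2.2⟩,
          le_refl _⟩
    | cons z' t' =>
        have hedge : (z, z') ∈ E := (List.isChain_cons_cons.1 hw.1.2).1
        have hrest : IsWalkFrom E z' y (z' :: t') :=
          ⟨⟨by simp, (List.isChain_cons_cons.1 hw.1.2).2⟩, rfl, by simpa using hw.2.2⟩
        have hsub : ∀ p ∈ (z' :: t').zip (z' :: t').tail,
            p ∈ (z :: z' :: t').zip (z :: z' :: t').tail := by
          intro p hp
          simp only [List.zip_cons_cons, List.tail_cons] at hp ⊢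
          exact List.mem_cons_of_mem _ hp
        have hlen' : (z' :: t').length ≤ n := by
          simp only [List.length_cons] at hlen ⊢
          omega
        obtain ⟨s', hs', hw'⟩ := ih (z' :: t') z' y hlen' hrest
          (fun p hp hpR => hgood p (hsub p hp) hpR)
        by_cases hzR : (z, z') ∈ RedSet E c
        · obtain ⟨g, hg, hwg⟩ := hgood (z, z') (by simp) hzR
          obtain ⟨hcat, hcatw⟩ := walk_trans c hg.1 hs'
          refine ⟨g ++ s'.tail, hcat, ?_⟩
          rw [hcatw, ww_cons_cons]
          linarith
        · obtain ⟨t'', rfl⟩ : ∃ t'', s' = z' :: t'' := by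
            cases s' with
            | nil => exact absurd rfl hs'.1.1
            | cons w t'' =>
                have : w = z' := by simpa using hs'.2.1
                subst this; exact ⟨t'', rfl⟩
          refine ⟨z :: z' :: t'', ⟨⟨by simp, ?_⟩, rfl, ?_⟩, ?_⟩
          · exact List.isChain_cons_cons.2 ⟨⟨hedge, hzR⟩, hs'.1.2⟩
          · rw [List.getLast?_cons_cons]
            exact hs'.2.2
          · rw [ww_cons_cons, ww_cons_cons]
            linarith

lemma bad_edge_exists [Fintype V] {E : Set (V × V)} {c : V → V → ℝ}
    (hpos : ∀ l : List V, IsCycle E l → 0 < walkWeight c l) {e : V × V} {l : List V}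
    (hbad : Bad E c e) (hW : WW E c e l) :
    ∃ f, Bad E c f ∧ f ∈ l.zip l.tail := by
  by_contra h
  push_neg at h
  have hgood : ∀ p ∈ l.zip l.tail, p ∈ RedSet E c → Good E c p := by
    intro p hp hpR
    by_contra hng
    exact (h p ⟨hpR, hng⟩) hp
  have hwE : IsWalkFrom E e.1 e.2 l := walkfrom_mono Set.diff_subset hW.1
  obtain ⟨s, hs, hws⟩ := replace_good E c l.length l e.1 e.2 le_rfl hwE hgood
  obtain ⟨s', hs'w, hh, hl2, hnd, hle, _⟩ :=
    shortcut c hpos Set.diff_subset s.length s le_rfl hs.1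
  exact hbad.2 ⟨s', ⟨⟨hs'w, hh.trans hs.2.1, hl2.trans hs.2.2⟩, hnd⟩, by linarith [hW.2]⟩

lemma prec_ne {E : Set (V × V)} {c : V → V → ℝ} {f e : V × V}
    (h : Prec E c f e) : f ≠ e := by
  obtain ⟨_, l, hmw, hf⟩ := h
  have := walk_edges hmw.1.1.1 f hf
  exact fun hEq => this.2 (by simp [hEq])

lemma prec_trans {E : Set (V × V)} {c : V → V → ℝ}
    (hpos : ∀ l : List V, IsCycle E l → 0 < walkWeight c l) {g f e : V × V}
    (h1 : Prec E c g f) (h2 : Prec E c f e) : Prec E c g e := by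
  obtain ⟨hgB, Q, hQmw, hgQ⟩ := h1
  obtain ⟨hfB, P, hPmw, hfP⟩ := h2
  have heQ : e ∉ Q.zip Q.tail := fun hmem =>
    no_mutual c hpos hPmw.1.1 hPmw.1.2 hfP hQmw.1.1 hQmw.1.2 hmem
  obtain ⟨a, b⟩ := f
  obtain ⟨p₁, p₂, rfl⟩ := edges_decomp hfP
  have hQe : List.Chain' (fun x y => (x, y) ∈ E \ {e}) Q := by
    rw [chain'_iff_edges]
    intro p hp
    have hpE := walk_edges hQmw.1.1.1 p hp
    exact ⟨hpE.1, fun hpe => heQ (Set.mem_singleton_iff.1 hpe ▸ hp)⟩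
  obtain ⟨hc', hh', hl', hwEq⟩ :=
    splice c hPmw.1.1.1.2 hQe hQmw.1.1.2.1 hQmw.1.1.2.2
  have hQne : Q ≠ [] := hQmw.1.1.1.1
  have hP'ne : p₁ ++ (Q ++ p₂) ≠ [] := by
    intro hE0
    rw [List.append_eq_nil_iff, List.append_eq_nil_iff] at hE0
    exact hQne hE0.2.1
  have hP'W : IsWalkFrom (E \ {e}) e.1 e.2 (p₁ ++ (Q ++ p₂)) :=
    ⟨⟨hP'ne, hc'⟩, hh'.trans hPmw.1.1.2.1, hl'.trans hPmw.1.1.2.2⟩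
  have hQw : walkWeight c Q ≤ c a b := hQmw.1.2
  have hwle : walkWeight c (p₁ ++ (Q ++ p₂)) ≤ walkWeight c (p₁ ++ a :: b :: p₂) := by
    linarith
  have hWWP' : WW E c e (p₁ ++ (Q ++ p₂)) := ⟨hP'W, le_trans hwle hPmw.1.2⟩
  have hnd : (p₁ ++ (Q ++ p₂)).Nodup := by
    by_contra hnd
    obtain ⟨s, hsw, hsh, hsl, hsnd, _, hlt⟩ :=
      shortcut c hpos Set.diff_subset _ (p₁ ++ (Q ++ p₂)) le_rfl hP'W.1
    have hslt := hlt hnd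
    have hWWs : WW E c e s :=
      ⟨⟨hsw, hsh.trans hP'W.2.1, hsl.trans hP'W.2.2⟩, by linarith [hWWP'.2]⟩
    have := hPmw.2.2 s hWWs hsnd
    linarith
  have hwEq' : walkWeight c (p₁ ++ (Q ++ p₂)) = walkWeight c (p₁ ++ a :: b :: p₂) :=
    le_antisymm hwle (hPmw.2.2 _ hWWP' hnd)
  refine ⟨hgB, p₁ ++ (Q ++ p₂), ⟨hWWP', hnd,
    fun l' hx1 hx2 => hwEq' ▸ hPmw.2.2 l' hx1 hx2⟩, ?_⟩
  obtain ⟨g1, g2⟩ := g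
  rw [edges_iff_infix] at hgQ ⊢
  refine hgQ.trans ?_
  rw [show p₁ ++ (Q ++ p₂) = p₁ ++ Q ++ p₂ by simp]
  exact List.infix_append p₁ Q p₂

lemma no_bad [Fintype V] (E : Set (V × V)) (c : V → V → ℝ)
    (hpos : ∀ l : List V, IsCycle E l → 0 < walkWeight c l) :
    ∀ e, ¬ Bad E c e := by
  by_contra h
  push_neg at h
  obtain ⟨e₀, he₀⟩ := h
  have hstep : ∀ p : {e : V × V // Bad E c e}, ∃ q : {e : V × V // Bad E c e},
      Prec E c q.1 p.1 := by
    rintro ⟨e, he⟩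
    obtain ⟨l, hl⟩ := exists_mw he.1
    obtain ⟨f, hfB, hfmem⟩ := bad_edge_exists hpos he hl.1
    exact ⟨⟨f, hfB⟩, hfB, l, hl, hfmem⟩
  choose F hF using hstep
  let seq : ℕ → {e : V × V // Bad E c e} := fun n => F^[n] ⟨e₀, he₀⟩
  have hsucc : ∀ n, Prec E c (seq (n + 1)).1 (seq n).1 := by
    intro n
    have hit : seq (n + 1) = F (seq n) := Function.iterate_succ_apply' F n _
    rw [hit]
    exact hF (seq n)
  have hlt : ∀ m k, Prec E c (seq (m + k + 1)).1 (seq m).1 := by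
    intro m k
    induction k with
    | zero => simpa using hsucc m
    | succ k ihk =>
        have harr : m + (k + 1) + 1 = (m + k + 1) + 1 := by omega
        rw [harr]
        exact prec_trans hpos (hsucc (m + k + 1)) ihk
  obtain ⟨i, j, hij, hEq⟩ := Finite.exists_ne_map_eq_of_infinite seq
  rcases hij.lt_or_gt with hlt' | hlt'
  · have hp := hlt i (j - i - 1)
    rw [show i + (j - i - 1) + 1 = j by omega] at hp
    rw [hEq] at hp
    exact prec_ne hp rfl
  · have hp := hlt j (i - j - 1)
    rw [show j + (i - j - 1) + 1 = i by omega] at hp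
    rw [← hEq] at hp
    exact prec_ne hp rfl

lemma main_red [Fintype V] (E : Set (V × V)) (c : V → V → ℝ)
    (hpos : ∀ l : List V, IsCycle E l → 0 < walkWeight c l) :
    IsRedundantEdgeSet E c (RedSet E c) := by
  refine ⟨fun e he => (show IsRedundantEdgeSet E c {e} from he).1 rfl, fun e he => ?_⟩
  by_contra hng
  exact no_bad E c hpos e ⟨he, hng⟩

end StmtAux

theorem stmt7 {V : Type*} [Fintype V] (E : Set (V × V)) (c : V → V → ℝ)
    (hpos : ∀ l : List V, IsCycle E l → 0 < walkWeight c l) :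
    (∀ R R' : Set (V × V), IsMaxRedundantEdgeSet E c R →
        IsMaxRedundantEdgeSet E c R' → R = R') ∧
    ((∃ e : V × V, IsRedundantEdgeSet E c {e}) →
      IsMaxRedundantEdgeSet E c {e : V × V | IsRedundantEdgeSet E c {e}}) := by
  classical
  have hmain := StmtAux.main_red E c hpos
  have hsub : ∀ R' : Set (V × V), IsRedundantEdgeSet E c R' → R' ⊆ StmtAux.RedSet E c := by
    intro R' hR' e he
    have heE : e ∈ E := hR'.1 he
    obtain ⟨l, hl, hw⟩ := hR'.2 e he
    have hmono : E \ R' ⊆ E \ {e} :=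
      Set.diff_subset_diff_right (Set.singleton_subset_iff.2 he)
    exact StmtAux.mem_red_iff.2 ⟨heE, l, ⟨StmtAux.walkfrom_mono hmono hl.1, hl.2⟩, hw⟩
  have hmax : IsMaxRedundantEdgeSet E c (StmtAux.RedSet E c) :=
    ⟨hmain, fun R' hR' => Set.ncard_le_ncard (hsub R' hR') (Set.toFinite _)⟩
  constructor
  · intro R R' hR hR'
    have h1 : R = StmtAux.RedSet E c :=
      Set.eq_of_subset_of_ncard_le (hsub R hR.1) (hR.2 _ hmain) (Set.toFinite _)
    have h2 : R' = StmtAux.RedSet E c :=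
      Set.eq_of_subset_of_ncard_le (hsub R' hR'.1) (hR'.2 _ hmain) (Set.toFinite _)
    rw [h1, h2]
  · intro _
    exact hmax
end

section
/- Define a relation ∼ on the node set of an edge-weighted directed graph G without negative-weight closed walks by: i ∼ j iff i = j or there exists a zero-weight closed walk in G traversing both i and j. Then ∼ is an equivalence relation. -/
lemma ww_cons_cons {V : Type*} (c : V → V → ℝ) (x y : V) (l : List V) :
    walkWeight c (x :: y :: l) = c x y + walkWeight c (y :: l) := by simp [walkWeight]

lemma ww_split {V : Type*} (c : V → V → ℝ) (xs : List V) (a : V) (ys : List V) :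
    walkWeight c (xs ++ a :: ys) = walkWeight c (xs ++ [a]) + walkWeight c (a :: ys) := by
  induction xs with
  | nil => simp [walkWeight]
  | cons x xs ih =>
    cases xs with
    | nil => simp [ww_cons_cons, walkWeight]
    | cons y xs' =>
      simp only [List.cons_append, ww_cons_cons] at *
      rw [ih]; ring

lemma chain_split {V : Type*} (R : V → V → Prop) (xs : List V) (a : V) (ys : List V) :
    List.Chain' R (xs ++ a :: ys) ↔ List.Chain' R (xs ++ [a]) ∧ List.Chain' R (a :: ys) := by
  unfold List.Chain'
  rw [List.isChain_append, List.isChain_append]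
  simp; tauto

lemma rotate {V : Type*} {E : Set (V × V)} (c : V → V → ℝ) {l : List V} {j : V}
    (hl : IsClosedWalk E l) (hj : j ∈ l) :
    ∃ l', IsClosedWalk E l' ∧ walkWeight c l' = walkWeight c l ∧
      l'.head? = some j ∧ l'.getLast? = some j ∧ ∀ x ∈ l, x ∈ l' := by
  obtain ⟨⟨hne, hch⟩, hlen, hcl⟩ := hl
  obtain ⟨s, t, rfl⟩ := List.append_of_mem hj
  cases s with
  | nil =>
    have hlj : (j :: t).getLast? = some j := by
      have := hcl.symm; simpa using this
    exact ⟨j :: t, ⟨⟨by simp, by simpa using hch⟩, by simpa using hlen, by simpa using hcl⟩,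
      rfl, rfl, hlj, by simp⟩
  | cons a s' =>
    have hla : ((a :: s') ++ j :: t).getLast? = some a := by
      rw [← hcl]; simp
    have htne : (j :: t) ≠ [] := by simp
    have hla2 : (j :: t).getLast? = some a := by
      rw [← List.getLast?_append_cons (a :: s') j t]; exact hla
    have hlast : (j :: t).getLast htne = a := by
      rw [List.getLast?_eq_getLast_of_ne_nil htne] at hla2
      exact Option.some.inj hla2
    have hdecomp : (j :: t).dropLast ++ [a] = j :: t := by
      rw [← hlast]; exact List.dropLast_append_getLast htne
    set u := (j :: t).dropLast with hu
    have hform : (j :: t) ++ (s' ++ [j]) = u ++ a :: (s' ++ [j]) := by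
      rw [← hdecomp]; simp
    refine ⟨(j :: t) ++ (s' ++ [j]), ?_, ?_, by simp, ?_, ?_⟩
    · refine ⟨⟨by simp, ?_⟩, ?_, ?_⟩
      · rw [chain_split _ (a :: s') j t] at hch
        rw [hform, chain_split]
        exact ⟨by rw [hdecomp]; exact hch.2, hch.1⟩
      · simp; omega
      · have h1 : ((j :: t) ++ (s' ++ [j])).head? = some j := by simp
        have h2 : ((j :: t) ++ (s' ++ [j])).getLast? = some j := by
          rw [show (j :: t) ++ (s' ++ [j]) = ((j :: t) ++ s') ++ [j] by simp,
            List.getLast?_append_cons]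
          rfl
        rw [h1, h2]
    · have h1 : walkWeight c ((a :: s') ++ j :: t)
          = walkWeight c ((a :: s') ++ [j]) + walkWeight c (j :: t) := ww_split ..
      rw [hform, ww_split, hdecomp, h1]
      simp only [List.cons_append]
      ring
    · rw [show (j :: t) ++ (s' ++ [j]) = ((j :: t) ++ s') ++ [j] by simp,
        List.getLast?_append_cons]
      rfl
    · intro x hx
      have hamem : a ∈ j :: t := by rw [← hdecomp]; simp
      simp only [List.cons_append, List.mem_cons, List.mem_append] at hx hamem ⊢
      rcases hx with rfl | hx
      · tauto
      · tauto

lemma concatCW {V : Type*} {E : Set (V × V)} (c : V → V → ℝ) {l1 l2 : List V} {j : V}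
    (h1 : IsClosedWalk E l1) (h2 : IsClosedWalk E l2)
    (hh1 : l1.head? = some j) (hl1 : l1.getLast? = some j)
    (hh2 : l2.head? = some j) (hl2 : l2.getLast? = some j) :
    ∃ L, IsClosedWalk E L ∧ walkWeight c L = walkWeight c l1 + walkWeight c l2 ∧
      (∀ x ∈ l1, x ∈ L) ∧ ∀ x ∈ l2, x ∈ L := by
  obtain ⟨⟨hne1, hch1⟩, hlen1, -⟩ := h1
  obtain ⟨⟨hne2, hch2⟩, hlen2, -⟩ := h2
  have hd1 : l1.dropLast ++ [j] = l1 := by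
    have := List.dropLast_append_getLast hne1
    rw [List.getLast?_eq_getLast_of_ne_nil hne1] at hl1
    rw [Option.some.inj hl1] at this
    exact this
  obtain ⟨t2, rfl⟩ : ∃ t2, l2 = j :: t2 := by
    cases l2 with
    | nil => exact absurd rfl hne2
    | cons a t =>
      have : a = j := by simpa using hh2
      exact ⟨t, by rw [this]⟩
  obtain ⟨u, hd1⟩ : ∃ u, u ++ [j] = l1 := ⟨l1.dropLast, hd1⟩
  refine ⟨u ++ j :: t2, ⟨⟨by simp, ?_⟩, ?_, ?_⟩, ?_, ?_, ?_⟩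
  · rw [chain_split, hd1]
    exact ⟨hch1, hch2⟩
  · have : 2 ≤ (j :: t2).length := hlen2
    simp only [List.length_append]
    omega
  · have hh : (u ++ j :: t2).head? = (u ++ [j]).head? := by
      cases u <;> simp
    rw [hd1] at hh
    have hl : (u ++ j :: t2).getLast? = (j :: t2).getLast? := List.getLast?_append_cons ..
    rw [hh, hh1, hl, hl2]
  · rw [ww_split, hd1]
  · intro x hx
    rw [← hd1] at hx
    simp only [List.mem_append, List.mem_cons] at hx ⊢
    tauto
  · intro x hx
    simp only [List.mem_append]
    exact Or.inr hx

theorem stmt9 {V : Type*} (E : Set (V × V)) (c : V → V → ℝ)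
    (hnn : ∀ l : List V, IsClosedWalk E l → 0 ≤ walkWeight c l) :
    Equivalence (Sim E c) := by
  constructor
  · intro x; exact Or.inl rfl
  · rintro x y (rfl | ⟨l, hl, hw, hx, hy⟩)
    · exact Or.inl rfl
    · exact Or.inr ⟨l, hl, hw, hy, hx⟩
  · rintro x y z hxy hyz
    rcases hxy with rfl | ⟨l1, hl1, hw1, hx1, hy1⟩
    · exact hyz
    rcases hyz with rfl | ⟨l2, hl2, hw2, hy2, hz2⟩
    · exact Or.inr ⟨l1, hl1, hw1, hx1, hy1⟩
    obtain ⟨l1', h1', hw1', hh1', hl1', hm1⟩ := rotate c hl1 hy1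
    obtain ⟨l2', h2', hw2', hh2', hl2', hm2⟩ := rotate c hl2 hy2
    obtain ⟨L, hL, hwL, hsub1, hsub2⟩ := concatCW c h1' h2' hh1' hl1' hh2' hl2'
    refine Or.inr ⟨L, hL, ?_, hsub1 x (hm1 x hx1), hsub2 z (hm2 z hz2)⟩
    rw [hwL, hw1', hw2', hw1, hw2, add_zero]
end

section
/- Let G = (V,E,c) be an edge-weighted directed graph without negative-weight closed walks, and suppose i, j, s all lie in the same equivalence class of the relation ∼. Then d_{ij} = d_{is} + d_{sj}, where d denotes minimum walk weight in G. -/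
lemma ww_single {V : Type*} (c : V → V → ℝ) (a : V) : walkWeight c [a] = 0 := by simp [walkWeight]

lemma ww_cons2 {V : Type*} (c : V → V → ℝ) (a b : V) (t : List V) :
    walkWeight c (a :: b :: t) = c a b + walkWeight c (b :: t) := by
  simp [walkWeight]

lemma ww_append {V : Type*} (c : V → V → ℝ) :
    ∀ (l1 : List V) (v : V) (l2 : List V), l1.getLast? = some v → l2.head? = some v →
      walkWeight c (l1 ++ l2.tail) = walkWeight c l1 + walkWeight c l2 := by
  intro l1
  induction l1 with
  | nil => intro v l2 h; simp at h
  | cons a l ih =>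
    intro v l2 h h2
    cases l with
    | nil =>
      simp at h; subst h
      cases l2 with
      | nil => simp at h2
      | cons x t =>
        simp at h2; subst h2
        simp [ww_single]
    | cons b t =>
      rw [List.getLast?_cons_cons] at h
      have := ih v l2 h h2
      show walkWeight c (a :: b :: (t ++ l2.tail)) = _
      rw [ww_cons2, ← List.cons_append, this, ww_cons2]
      ring

lemma walkFrom_append {V : Type*} {E : Set (V × V)} (c : V → V → ℝ) {u v w : V} {l1 l2 : List V}
    (h1 : IsWalkFrom E u v l1) (h2 : IsWalkFrom E v w l2) :
    IsWalkFrom E u w (l1 ++ l2.tail) ∧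
      walkWeight c (l1 ++ l2.tail) = walkWeight c l1 + walkWeight c l2 := by
  obtain ⟨⟨hne1, hch1⟩, hh1, hl1⟩ := h1
  obtain ⟨⟨hne2, hch2⟩, hh2, hl2⟩ := h2
  obtain ⟨t, rfl⟩ : ∃ t, l2 = v :: t := by
    cases l2 with
    | nil => simp at hh2
    | cons x t => simp at hh2; subst hh2; exact ⟨t, rfl⟩
  refine ⟨⟨⟨by simp [hne1], ?_⟩, ?_, ?_⟩, ww_append c l1 v (v :: t) hl1 rfl⟩
  · show List.IsChain _ (l1 ++ (v :: t).tail)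
    rw [List.isChain_append]
    refine ⟨hch1, (List.isChain_cons.mp hch2).2, ?_⟩
    intro x hx y hy
    rw [hl1] at hx
    simp at hx; subst hx
    exact (List.isChain_cons.mp hch2).1 y hy
  · cases l1 with
    | nil => simp at hne1
    | cons a r => simpa using hh1
  · cases t with
    | nil =>
      simp only [List.getLast?_singleton, Option.some.injEq] at hl2
      subst hl2; simpa using hl1
    | cons b r =>
      rw [List.getLast?_append_of_ne_nil _ (by simp)]
      simpa using hl2

lemma walkFrom_split {V : Type*} {E : Set (V × V)} (c : V → V → ℝ) {u v x : V} {l : List V}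
    (h : IsWalkFrom E u v l) (hx : x ∈ l) :
    ∃ l1 l2, IsWalkFrom E u x l1 ∧ IsWalkFrom E x v l2 ∧
      walkWeight c l1 + walkWeight c l2 = walkWeight c l ∧ l = l1 ++ l2.tail := by
  obtain ⟨a, b, rfl⟩ := List.append_of_mem hx
  obtain ⟨⟨hne, hch⟩, hh, hl⟩ := h
  refine ⟨a ++ [x], x :: b, ⟨⟨by simp, ?_⟩, ?_, by simp⟩, ⟨⟨by simp, ?_⟩, rfl, ?_⟩,
    (ww_append c (a ++ [x]) x (x :: b) (by simp) rfl).symm.trans (by simp), by simp⟩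
  · exact hch.prefix ⟨b, by simp⟩
  · cases a with
    | nil => simpa using hh
    | cons p q => simpa using hh
  · exact hch.suffix ⟨a, rfl⟩
  · cases b with
    | nil => simpa using hl
    | cons p q => rw [List.getLast?_append_of_ne_nil _ (by simp)] at hl; simpa using hl

lemma sim_pair {V : Type*} {E : Set (V × V)} {c : V → V → ℝ} {i s : V} (h : Sim E c i s) :
    ∃ p q, IsWalkFrom E i s p ∧ IsWalkFrom E s i q ∧ walkWeight c p + walkWeight c q = 0 := by
  rcases h with rfl | ⟨l, ⟨⟨hne, hch⟩, hlen, hcl⟩, hw0, hi, hs⟩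
  · exact ⟨[i], [i], ⟨⟨by simp, List.isChain_singleton _⟩, rfl, rfl⟩, ⟨⟨by simp, List.isChain_singleton _⟩, rfl, rfl⟩,
      by simp [ww_single]⟩
  · obtain ⟨u, hu⟩ : ∃ u, l.head? = some u := by
      cases l with | nil => simp at hne | cons a t => exact ⟨a, rfl⟩
    have hlast : l.getLast? = some u := hcl ▸ hu
    have hwf : IsWalkFrom E u u l := ⟨⟨hne, hch⟩, hu, hlast⟩
    obtain ⟨l1, l2, h1, h2, hw12, hldec⟩ := walkFrom_split c hwf hi
    rw [hldec] at hs
    rcases List.mem_append.mp hs with hs1 | hs2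
    · obtain ⟨a, b, ha, hb, hwab, -⟩ := walkFrom_split c h1 hs1
      obtain ⟨hw, he⟩ := walkFrom_append c h2 ha
      exact ⟨l2 ++ a.tail, b, hw, hb, by rw [he]; linarith⟩
    · have hs2' : s ∈ l2 := l2.tail_sublist.mem hs2
      obtain ⟨a, b, ha, hb, hwab, -⟩ := walkFrom_split c h2 hs2'
      obtain ⟨hw, he⟩ := walkFrom_append c hb h1
      exact ⟨a, b ++ l1.tail, ha, hw, by rw [he]; linarith⟩

theorem stmt12 {V : Type*} (E : Set (V × V)) (c : V → V → ℝ)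
    (hnn : ∀ l : List V, IsClosedWalk E l → 0 ≤ walkWeight c l)
    (i j s : V) (his : Sim E c i s) (hsj : Sim E c s j)
    (dij dis dsj : ℝ)
    (hij : IsMinWalkWeight E c i j dij)
    (his' : IsMinWalkWeight E c i s dis)
    (hsj' : IsMinWalkWeight E c s j dsj) :
    dij = dis + dsj := by
  obtain ⟨⟨lij, hlij, hwij⟩, hminij⟩ := hij
  obtain ⟨⟨lis, hlis, hwis⟩, hminis⟩ := his'
  obtain ⟨⟨lsj, hlsj, hwsj⟩, hminsj⟩ := hsj'
  obtain ⟨p, q, hp, hq, hpq⟩ := sim_pair his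
  have h1 : dij ≤ dis + dsj := by
    obtain ⟨hw, he⟩ := walkFrom_append c hlis hlsj
    have := hminij _ hw
    rw [he, hwis, hwsj] at this
    exact this
  have h2 : dis + dsj ≤ dij := by
    have hdis : dis ≤ walkWeight c p := hminis _ hp
    obtain ⟨hw, he⟩ := walkFrom_append c hq hlij
    have hdsj : dsj ≤ walkWeight c q + dij := by
      have := hminsj _ hw
      rw [he, hwij] at this
      exact this
    linarith
  linarith
end

section
/- Let G = (V,E,c) be an edge-weighted directed graph without negative-weight closed walks, let R be a redundant edge set of G, and let G^c = (V, E∖R, c). Then for all i, j ∈ V, i ∼ j in G if and only if i ∼ j in G^c; in particular the equivalence class partition induced by ∼ is the same in G and in G^c. -/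
def subst {V : Type*} (f : V → V → List V) : List V → List V
  | [] => []
  | [a] => [a]
  | a :: b :: rest => (f a b).dropLast ++ subst f (b :: rest)

lemma walkWeight_cons {V : Type*} (c : V → V → ℝ) (a : V) (l : List V) :
    walkWeight c (a :: l) = (l.head?.elim 0 (fun h => c a h)) + walkWeight c l := by
  cases l with
  | nil => simp [walkWeight]
  | cons b t => simp [walkWeight]

lemma walkWeight_splice {V : Type*} (c : V → V → ℝ) (l' : List V) (b : V) (t : List V) :
    walkWeight c (l' ++ b :: t) = walkWeight c (l' ++ [b]) + walkWeight c (b :: t) := by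
  induction l' with
  | nil => simp [walkWeight_cons, walkWeight]
  | cons a l'' ih =>
      have hh : (l'' ++ b :: t).head? = (l'' ++ [b]).head? := by cases l'' <;> simp
      simp only [List.cons_append, walkWeight_cons, hh, ih]
      ring

lemma subst_spec {V : Type*} (E F : Set (V × V)) (c : V → V → ℝ) (f : V → V → List V)
    (hf : ∀ a b, (a, b) ∈ E → (f a b ≠ [] ∧ (f a b).Chain' (fun x y => (x, y) ∈ F)) ∧
      (f a b).head? = some a ∧ (f a b).getLast? = some b ∧ walkWeight c (f a b) ≤ c a b) :
    ∀ l : List V, l ≠ [] → l.Chain' (fun a b => (a, b) ∈ E) →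
      (subst f l ≠ [] ∧ (subst f l).Chain' (fun x y => (x, y) ∈ F)) ∧
      (subst f l).head? = l.head? ∧ (subst f l).getLast? = l.getLast? ∧
      walkWeight c (subst f l) ≤ walkWeight c l ∧ ∀ x ∈ l, x ∈ subst f l := by
  intro l
  induction l with
  | nil => intro h; exact absurd rfl h
  | cons a l ih =>
    intro _ hch
    cases l with
    | nil => simp [subst, List.Chain', List.isChain_singleton]
    | cons b rest =>
      have hab : (a, b) ∈ E := (List.isChain_cons_cons.mp hch).1
      have hch' : (b :: rest).Chain' (fun a b => (a, b) ∈ E) := (List.isChain_cons_cons.mp hch).2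
      obtain ⟨⟨hne2, hchs⟩, hhd2, hlast2, hw2, hmem2⟩ := ih (by simp) hch'
      obtain ⟨⟨hpne, hpch⟩, hphd, hplast, hpw⟩ := hf a b hab
      set p := f a b with hp
      have hpeq : p.dropLast ++ [b] = p := by
        have := List.dropLast_append_getLast hpne
        rw [List.getLast?_eq_getLast hpne] at hplast
        rw [Option.some.injEq] at hplast
        rw [hplast] at this; exact this
      obtain ⟨s, hs⟩ : ∃ s, subst f (b :: rest) = b :: s := by
        cases hq : subst f (b :: rest) with
        | nil => exact absurd hq hne2
        | cons x s =>
          rw [hq] at hhd2; simp at hhd2; subst hhd2; exact ⟨s, rfl⟩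
      have hsub : subst f (a :: b :: rest) = p.dropLast ++ b :: s := by
        simp [subst, hs, hp]
      rw [hsub]
      have hch1 : (p.dropLast ++ [b]).Chain' (fun x y => (x, y) ∈ F) := by rw [hpeq]; exact hpch
      simp only [List.Chain'] at hch1
      rw [List.isChain_append] at hch1
      have hchain : (p.dropLast ++ b :: s).Chain' (fun x y => (x, y) ∈ F) := by
        simp only [List.Chain']
        rw [List.isChain_append]
        refine ⟨hch1.1, ?_, ?_⟩
        · rw [← hs]; exact hchs
        · intro x hx y hy
          simp at hy; subst hy
          exact hch1.2.2 x hx b (by simp)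
      refine ⟨⟨by simp, hchain⟩, ?_, ?_, ?_, ?_⟩
      · cases hd : p.dropLast with
        | nil =>
          have : p = [b] := by rw [← hpeq, hd]; simp
          rw [this] at hphd; simp at hphd
          simp [hd, hphd]
        | cons x xs =>
          have : p.head? = some x := by rw [← hpeq, hd]; simp
          rw [hphd] at this; simp at this
          simp [hd, this]
      · have h1 : (p.dropLast ++ b :: s).getLast? = (b :: s).getLast? :=
          List.getLast?_append_of_ne_nil _ (by simp)
        rw [h1, ← hs, hlast2]
        simp [List.getLast?_cons_cons]
      · have hw : walkWeight c (p.dropLast ++ b :: s)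
            = walkWeight c p + walkWeight c (b :: s) := by
          rw [walkWeight_splice, hpeq]
        rw [hw, ← hs]
        have hw3 : walkWeight c (a :: b :: rest) = c a b + walkWeight c (b :: rest) := by
          rw [walkWeight_cons]; simp
        rw [hw3]
        exact add_le_add hpw hw2
      · intro x hx
        rcases List.mem_cons.mp hx with h | h
        · subst h
          have : x ∈ p := List.mem_of_mem_head? (by rw [hphd]; rfl)
          rw [← hpeq] at this
          rcases List.mem_append.mp this with h' | h'
          · exact List.mem_append.mpr (Or.inl h')
          · simp at h'; subst h'; simp
        · have := hmem2 x h
          rw [hs] at this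
          exact List.mem_append.mpr (Or.inr this)

theorem stmt13 {V : Type*} (E : Set (V × V)) (c : V → V → ℝ)
    (hnn : ∀ l : List V, IsClosedWalk E l → 0 ≤ walkWeight c l)
    (R : Set (V × V)) (hR : IsRedundantEdgeSet E c R) :
    ∀ i j : V, Sim E c i j ↔ Sim (E \ R) c i j := by
  intro i j
  constructor
  · rintro (rfl | ⟨l, ⟨⟨hlne, hlch⟩, hlen, hcl⟩, hw0, hi, hj⟩)
    · exact Or.inl rfl
    by_cases hij : i = j
    · exact Or.inl hij
    right
    classical
    set f : V → V → List V := fun a b =>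
      if h : (a, b) ∈ R then (hR.2 (a, b) h).choose else [a, b] with hfdef
    have hf : ∀ a b, (a, b) ∈ E → (f a b ≠ [] ∧ (f a b).Chain' (fun x y => (x, y) ∈ E \ R)) ∧
        (f a b).head? = some a ∧ (f a b).getLast? = some b ∧ walkWeight c (f a b) ≤ c a b := by
      intro a b hab
      by_cases h : (a, b) ∈ R
      · have hspec := (hR.2 (a, b) h).choose_spec
        obtain ⟨⟨⟨⟨hne, hch⟩, hhd, hlast⟩, _⟩, hw⟩ := hspec
        simp only [hfdef]
        rw [dif_pos h]
        exact ⟨⟨hne, hch⟩, hhd, hlast, hw⟩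
      · simp only [hfdef]
        rw [dif_neg h]
        refine ⟨⟨by simp, ?_⟩, by simp, by simp, ?_⟩
        · refine List.isChain_cons_cons.mpr ⟨?_, by simp⟩
          exact Set.mem_diff_of_mem hab h
        · simp [walkWeight]
    obtain ⟨⟨hne', hch'⟩, hhd', hlast', hw', hmem'⟩ :=
      subst_spec E (E \ R) c f hf l hlne hlch
    have hiL : i ∈ subst f l := hmem' i hi
    have hjL : j ∈ subst f l := hmem' j hj
    have hlen2 : 2 ≤ (subst f l).length := by
      match hq : subst f l with
      | [] => rw [hq] at hiL; simp at hiL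
      | [x] =>
        rw [hq] at hiL hjL; simp at hiL hjL
        exact absurd (hiL.trans hjL.symm) hij
      | x :: y :: t => simp
    have hcyc : IsClosedWalk (E \ R) (subst f l) :=
      ⟨⟨hne', hch'⟩, hlen2, by rw [hhd', hlast']; exact hcl⟩
    have hcycE : IsClosedWalk E (subst f l) :=
      ⟨⟨hne', hch'.imp fun a b h => h.1⟩, hlen2, by rw [hhd', hlast']; exact hcl⟩
    refine ⟨subst f l, hcyc, le_antisymm (by rw [← hw0]; exact hw') (hnn _ hcycE), hiL, hjL⟩
  · rintro (rfl | ⟨l, ⟨⟨hlne, hlch⟩, hlen, hcl⟩, hw0, hi, hj⟩)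
    · exact Or.inl rfl
    exact Or.inr ⟨l, ⟨⟨hlne, hlch.imp fun a b h => h.1⟩, hlen, hcl⟩, hw0, hi, hj⟩
end

section
/- Let G = (V,E,c) be an edge-weighted directed graph without negative-weight closed walks, let R be a redundant edge set of G, and let A ⊆ E be such that for every (i,j) ∈ A there exists a walk from i to j in (V, E∖(R∪A), c) of weight at most c_{ij}. Then R ∪ A is a redundant edge set of G. -/
namespace Stmt15Aux
variable {V : Type*}

theorem walkWeight_cons_cons (c : V → V → ℝ) (a b : V) (l : List V) :
    walkWeight c (a :: b :: l) = c a b + walkWeight c (b :: l) := by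
  simp [walkWeight]

@[simp] theorem walkWeight_single (c : V → V → ℝ) (a : V) : walkWeight c [a] = 0 := by
  simp [walkWeight]

theorem walkWeight_append (c : V → V → ℝ) (a : V) (l₁ l₂ : List V) :
    walkWeight c (l₁ ++ a :: l₂) = walkWeight c (l₁ ++ [a]) + walkWeight c (a :: l₂) := by
  induction l₁ with
  | nil => simp
  | cons b t ih =>
    cases t with
    | nil => simp [walkWeight_cons_cons]
    | cons b' t' =>
      simp only [List.cons_append, walkWeight_cons_cons] at *
      rw [ih]; ring

theorem exists_dup_split {l : List V} (h : ¬ l.Nodup) :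
    ∃ (x : V) (l₁ l₂ l₃ : List V), l = l₁ ++ x :: (l₂ ++ x :: l₃) := by
  induction l with
  | nil => simp at h
  | cons a t ih =>
    by_cases ha : a ∈ t
    · obtain ⟨s, t', rfl⟩ := List.append_of_mem ha
      exact ⟨a, [], s, t', by simp⟩
    · have ht : ¬ t.Nodup := fun hn => h (List.nodup_cons.mpr ⟨ha, hn⟩)
      obtain ⟨x, l₁, l₂, l₃, rfl⟩ := ih ht
      exact ⟨x, a :: l₁, l₂, l₃, by simp⟩

theorem head?_congr (l₁ : List V) (x : V) (s t : List V) :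
    (l₁ ++ x :: s).head? = (l₁ ++ x :: t).head? := by
  cases l₁ <;> simp

/-- shortening a walk to a nodup walk of no greater weight. -/
theorem shorten (E E' : Set (V × V)) (c : V → V → ℝ)
    (hnn : ∀ l : List V, IsClosedWalk E l → 0 ≤ walkWeight c l) (hsub : E' ⊆ E) :
    ∀ (n : ℕ) (l : List V), l.length = n → IsWalk E' l → ∃ p : List V, IsWalk E' p ∧ p.Nodup ∧
      p.head? = l.head? ∧ p.getLast? = l.getLast? ∧ walkWeight c p ≤ walkWeight c l := by
  intro n
  induction n using Nat.strong_induction_on with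
  | _ n ih =>
    intro l hlen hw
    by_cases hnd : l.Nodup
    · exact ⟨l, hw, hnd, rfl, rfl, le_refl _⟩
    · obtain ⟨x, l₁, l₂, l₃, rfl⟩ := exists_dup_split hnd
      -- chain' decomposition
      have hch := hw.2
      rw [List.Chain', List.isChain_append] at hch
      obtain ⟨hc1, hc2, hc12⟩ := hch
      have hc2' : List.Chain' (fun a b => (a, b) ∈ E') ((x :: l₂) ++ (x :: l₃)) := hc2
      rw [List.Chain', List.isChain_append] at hc2'
      obtain ⟨hcx2, hcx3, hcomp⟩ := hc2'
      -- the cut closed walk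
      have hclosed : IsClosedWalk E (x :: (l₂ ++ [x])) := by
        refine ⟨⟨by simp, ?_⟩, by simp, ?_⟩
        · have : List.Chain' (fun a b => (a, b) ∈ E') ((x :: l₂) ++ [x]) := by
            rw [List.Chain', List.isChain_append]
            refine ⟨hcx2, List.isChain_singleton _, ?_⟩
            intro a ha y hy
            simp only [List.head?_cons, Option.mem_some_iff] at hy
            subst hy
            exact hcomp a ha x (by simp)
          have := this
          show List.Chain' (fun a b => (a, b) ∈ E) ((x :: l₂) ++ [x])
          exact this.imp (fun a b hab => hsub hab)
        · show some x = ((x :: l₂) ++ [x]).getLast?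
          rw [List.getLast?_append_of_ne_nil _ (by simp)]
          simp
      have hcw := hnn _ hclosed
      -- the shorter walk
      have hw' : IsWalk E' (l₁ ++ x :: l₃) := by
        constructor
        · simp
        · rw [List.Chain', List.isChain_append]
          refine ⟨hc1, hcx3, ?_⟩
          intro a ha b hb
          simp only [List.head?_cons, Option.mem_some_iff] at hb
          subst hb
          exact hc12 a ha x (by simp)
      have hlen' : (l₁ ++ x :: l₃).length < n := by
        subst hlen; simp
      obtain ⟨p, hp, hpnd, hph, hpl, hpw⟩ := ih _ hlen' (l₁ ++ x :: l₃) rfl hw'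
      refine ⟨p, hp, hpnd, ?_, ?_, ?_⟩
      · rw [hph]; exact head?_congr l₁ x l₃ (l₂ ++ x :: l₃)
      · rw [hpl]
        have h1 : (l₁ ++ x :: l₃).getLast? = (x :: l₃).getLast? :=
          List.getLast?_append_of_ne_nil _ (by simp)
        have h2 : (l₁ ++ x :: (l₂ ++ x :: l₃)).getLast? = (x :: l₃).getLast? := by
          rw [show l₁ ++ x :: (l₂ ++ x :: l₃) = (l₁ ++ x :: l₂) ++ (x :: l₃) by simp]
          exact List.getLast?_append_of_ne_nil _ (by simp)
        rw [h1, h2]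
      · refine le_trans hpw ?_
        have e1 : walkWeight c (l₁ ++ x :: (l₂ ++ x :: l₃))
            = walkWeight c (l₁ ++ [x]) + walkWeight c (x :: (l₂ ++ x :: l₃)) :=
          walkWeight_append c x l₁ _
        have e2 : walkWeight c (x :: (l₂ ++ x :: l₃))
            = walkWeight c ((x :: l₂) ++ [x]) + walkWeight c (x :: l₃) := by
          have := walkWeight_append c x (x :: l₂) l₃
          simpa using this
        have e3 : walkWeight c (l₁ ++ x :: l₃)
            = walkWeight c (l₁ ++ [x]) + walkWeight c (x :: l₃) :=
          walkWeight_append c x l₁ l₃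
        have hcw' : 0 ≤ walkWeight c ((x :: l₂) ++ [x]) := hcw
        rw [e1, e2, e3]
        linarith

/-- Splicing: replace A-edges of a walk in E \ R by their replacement walks. -/
theorem splice (E : Set (V × V)) (c : V → V → ℝ) (R A : Set (V × V))
    (h : ∀ e ∈ A, ∃ l : List V,
      IsWalkFrom (E \ (R ∪ A)) e.1 e.2 l ∧ walkWeight c l ≤ c e.1 e.2) :
    ∀ (l : List V), IsWalk (E \ R) l → ∃ l' : List V, IsWalk (E \ (R ∪ A)) l' ∧
      l'.head? = l.head? ∧ l'.getLast? = l.getLast? ∧ walkWeight c l' ≤ walkWeight c l := by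
  intro l hl
  induction l with
  | nil => exact absurd rfl hl.1
  | cons a t ih =>
    cases t with
    | nil => exact ⟨[a], ⟨by simp, List.isChain_singleton _⟩, rfl, rfl, le_refl _⟩
    | cons b t' =>
      have hedge : (a, b) ∈ E \ R := (List.isChain_cons_cons.mp hl.2).1
      have htail : IsWalk (E \ R) (b :: t') := ⟨by simp, (List.isChain_cons_cons.mp hl.2).2⟩
      obtain ⟨m, hm, hmh, hml, hmw⟩ := ih htail
      -- m starts at b
      obtain ⟨m', rfl⟩ : ∃ m', m = b :: m' := by
        cases m with
        | nil => simp at hmh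
        | cons y ys => simp at hmh; subst hmh; exact ⟨ys, rfl⟩
      by_cases hab : (a, b) ∈ A
      · -- replace the edge by a walk
        obtain ⟨w, ⟨hww, hwh, hwl⟩, hwle⟩ := h (a, b) hab
        obtain ⟨w₀, rfl⟩ : ∃ w₀, w = w₀ ++ [b] := List.getLast?_eq_some_iff.mp hwl
        refine ⟨w₀ ++ b :: m', ?_, ?_, ?_, ?_⟩
        · constructor
          · simp
          · rw [List.Chain', List.isChain_append]
            have hwch := hww.2
            rw [List.Chain', List.isChain_append] at hwch
            refine ⟨hwch.1, hm.2, ?_⟩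
            intro x hx y hy
            simp only [List.head?_cons, Option.mem_some_iff] at hy
            subst hy
            exact hwch.2.2 x hx b (by simp)
        · have hh : (w₀ ++ b :: m').head? = (w₀ ++ [b]).head? := head?_congr w₀ b m' []
          rw [hh, hwh]; simp
        · rw [List.getLast?_append_of_ne_nil _ (show (b :: m' : List V) ≠ [] by simp), hml,
            List.getLast?_cons_cons]
        · have e1 : walkWeight c (w₀ ++ b :: m')
              = walkWeight c (w₀ ++ [b]) + walkWeight c (b :: m') := walkWeight_append c b w₀ m'
          rw [e1, walkWeight_cons_cons]
          exact add_le_add hwle hmw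
      · -- keep the edge
        have hedge' : (a, b) ∈ E \ (R ∪ A) := ⟨hedge.1, fun hc => hc.elim hedge.2 hab⟩
        refine ⟨a :: b :: m', ?_, by simp, ?_, ?_⟩
        · exact ⟨by simp, List.isChain_cons_cons.mpr ⟨hedge', hm.2⟩⟩
        · rw [List.getLast?_cons_cons, hml, List.getLast?_cons_cons]
        · rw [walkWeight_cons_cons, walkWeight_cons_cons]
          exact add_le_add_right hmw _

end Stmt15Aux

open Stmt15Aux in
theorem stmt15 {V : Type*} (E : Set (V × V)) (c : V → V → ℝ)
    (hnn : ∀ l : List V, IsClosedWalk E l → 0 ≤ walkWeight c l)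
    (R A : Set (V × V)) (hR : IsRedundantEdgeSet E c R) (hA : A ⊆ E)
    (h : ∀ e ∈ A, ∃ l : List V,
      IsWalkFrom (E \ (R ∪ A)) e.1 e.2 l ∧ walkWeight c l ≤ c e.1 e.2) :
    IsRedundantEdgeSet E c (R ∪ A) := by
  constructor
  · exact Set.union_subset hR.1 hA
  · rintro e (heR | heA)
    · obtain ⟨l, ⟨⟨hlw, hlh, hll⟩, _⟩, hlc⟩ := hR.2 e heR
      obtain ⟨l', hl'w, hl'h, hl'l, hl'wt⟩ := splice E c R A h l hlw
      obtain ⟨p, hp, hpnd, hph, hpl, hpw⟩ :=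
        shorten E (E \ (R ∪ A)) c hnn Set.diff_subset l'.length l' rfl hl'w
      exact ⟨p, ⟨⟨hp, by rw [hph, hl'h, hlh], by rw [hpl, hl'l, hll]⟩, hpnd⟩,
        le_trans (le_trans hpw hl'wt) hlc⟩
    · obtain ⟨l, ⟨hlw, hlh, hll⟩, hlc⟩ := h e heA
      obtain ⟨p, hp, hpnd, hph, hpl, hpw⟩ :=
        shorten E (E \ (R ∪ A)) c hnn Set.diff_subset l.length l rfl hlw
      exact ⟨p, ⟨⟨hp, by rw [hph, hlh], by rw [hpl, hll]⟩, hpnd⟩, le_trans hpw hlc⟩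
end

section
/- Let G = (V,E,c) be an edge-weighted directed graph without negative-weight closed walks. Let (i,j) ∈ E with both endpoints in the same ∼-equivalence class [v_k] and with c_{ij} = d_{ij} (the minimum walk weight from i to j). Then any walk from i to j in G of weight exactly d_{ij} traverses only nodes in [v_k]. -/
section Helpers
variable {V : Type*} {E : Set (V × V)} {c : V → V → ℝ}

lemma walkWeight_cons_s17 (c : V → V → ℝ) (x : V) (m : List V) :
    walkWeight c (x :: m) = (m.head?.elim 0 (c x)) + walkWeight c m := by
  cases m with
  | nil => simp [walkWeight]
  | cons y m' => simp [walkWeight]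

lemma walkWeight_singleton (c : V → V → ℝ) (x : V) : walkWeight c [x] = 0 := by
  simp [walkWeight]

lemma walkWeight_split (c : V → V → ℝ) :
    ∀ (a : List V) (v : V) (b : List V),
    walkWeight c (a ++ v :: b) = walkWeight c (a ++ [v]) + walkWeight c (v :: b)
  | [], v, b => by simp [walkWeight_singleton]
  | x :: a, v, b => by
    rw [List.cons_append, List.cons_append, walkWeight_cons_s17, walkWeight_cons_s17,
      walkWeight_split c a v b]
    have h : (a ++ v :: b).head? = (a ++ [v]).head? := by cases a <;> simp
    rw [h]; ring

lemma exists_concat_of_getLast? {l : List V} {v : V} (h : l.getLast? = some v) :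
    ∃ a, l = a ++ [v] := by
  rcases l.eq_nil_or_concat with rfl | ⟨a, b, rfl⟩
  · simp at h
  · simp only [List.concat_eq_append, List.getLast?_concat] at h ⊢
    exact ⟨a, by rw [Option.some_inj.mp h]⟩

lemma getLast?_append_ne {l1 l2 : List V} (h : l2 ≠ []) :
    (l1 ++ l2).getLast? = l2.getLast? := by
  obtain ⟨a, ha⟩ := Option.isSome_iff_exists.mp (List.getLast?_isSome.mpr h)
  rw [List.getLast?_append, ha]; rfl

lemma split_walk {u z v : V} {a b : List V}
    (h : IsWalkFrom E u z (a ++ v :: b)) :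
    IsWalkFrom E u v (a ++ [v]) ∧ IsWalkFrom E v z (v :: b) := by
  obtain ⟨⟨hne, hch⟩, hh, hl⟩ := h
  rw [show a ++ v :: b = (a ++ [v]) ++ b by simp] at hch
  unfold List.Chain' at hch
  rw [List.isChain_append] at hch
  obtain ⟨hc1, hc2, hlink⟩ := hch
  have hh1 : (a ++ [v]).head? = some u := by
    cases a with
    | nil => simpa using hh
    | cons y a' => simpa using hh
  have hch2 : (v :: b).Chain' (fun a b => (a, b) ∈ E) := by
    unfold List.Chain'
    rw [List.isChain_cons]
    exact ⟨fun y hy => hlink v (by simp) y hy, hc2⟩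
  have hl2 : (v :: b).getLast? = some z := by
    cases b with
    | nil =>
      have : (a ++ [v]).getLast? = some z := by simpa using hl
      rw [List.getLast?_concat] at this
      simpa using this
    | cons y b' =>
      rw [getLast?_append_ne (by simp)] at hl
      simpa using hl
  refine ⟨⟨⟨by simp, hc1⟩, hh1, List.getLast?_concat⟩, ⟨⟨by simp, hch2⟩, rfl, hl2⟩⟩

lemma concat_walk {u v z : V} {l1 l2 : List V}
    (h1 : IsWalkFrom E u v l1) (h2 : IsWalkFrom E v z l2) :
    IsWalkFrom E u z (l1 ++ l2.tail) ∧
      walkWeight c (l1 ++ l2.tail) = walkWeight c l1 + walkWeight c l2 := by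
  obtain ⟨⟨hne1, hch1⟩, hh1, hl1⟩ := h1
  obtain ⟨⟨hne2, hch2⟩, hh2, hl2⟩ := h2
  obtain ⟨a, rfl⟩ := exists_concat_of_getLast? hl1
  obtain ⟨t, rfl⟩ : ∃ t, l2 = v :: t := by
    cases l2 with
    | nil => exact absurd rfl hne2
    | cons w t =>
      have hw : w = v := by simpa using hh2
      exact ⟨t, by rw [hw]⟩
  have heq : (a ++ [v]) ++ (v :: t).tail = a ++ v :: t := by simp
  rw [heq]
  constructor
  · refine ⟨⟨by simp, ?_⟩, ?_, ?_⟩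
    · rw [show a ++ v :: t = (a ++ [v]) ++ t by simp]; unfold List.Chain'; rw [List.isChain_append]
      refine ⟨hch1, (List.isChain_cons.mp hch2).2, ?_⟩
      intro x hx y hy
      rw [List.getLast?_concat] at hx
      simp only [Option.mem_def, Option.some_inj] at hx
      subst hx
      exact (List.isChain_cons.mp hch2).1 y hy
    · cases a with
      | nil => simpa using hh1
      | cons y a' => simpa using hh1
    · cases t with
      | nil =>
        have hz : v = z := by simpa using hl2
        subst hz
        simpa using List.getLast?_concat (l := a) (a := v)
      | cons y t' =>
        rw [getLast?_append_ne (by simp)]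
        simpa using hl2
  · rw [walkWeight_split]

lemma rotate_walk {x u : V} {w : List V} (hw : IsWalkFrom E x x w) (hu : u ∈ w) :
    ∃ w', IsWalkFrom E u u w' ∧ walkWeight c w' = walkWeight c w ∧
      w.length ≤ w'.length ∧ ∀ t ∈ w, t ∈ w' := by
  obtain ⟨a, b, rfl⟩ := List.append_of_mem hu
  obtain ⟨h1, h2⟩ := split_walk hw
  obtain ⟨h3, h4⟩ := concat_walk (c := c) h2 h1
  refine ⟨(u :: b) ++ (a ++ [u]).tail, h3, ?_, ?_, ?_⟩
  · rw [h4]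
    conv_rhs => rw [walkWeight_split c a u b]
    ring
  · simp [List.length_append, List.length_tail]
    cases a <;> simp <;> omega
  · intro t ht
    have hx : x ∈ u :: b := by
      have := h2.2.2
      exact List.mem_of_mem_getLast? (by rw [this]; rfl)
    simp only [List.mem_append, List.mem_cons] at ht ⊢
    rcases ht with ht | ht
    · -- t ∈ a
      cases a with
      | nil => simp at ht
      | cons y a' =>
        have hy : y = x := by simpa using hw.2.1
        simp only [List.mem_cons] at ht
        rcases ht with rfl | ht
        · rw [hy]; rcases List.mem_cons.mp hx with h | h
          · exact Or.inl (Or.inl h)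
          · exact Or.inl (Or.inr h)
        · right; simp [ht]
    · rcases ht with rfl | ht
      · exact Or.inl (Or.inl rfl)
      · exact Or.inl (Or.inr ht)

lemma cut_walk {u v : V} {w : List V} (hw : IsWalkFrom E u u w) (hv : v ∈ w) :
    ∃ p q, IsWalkFrom E u v p ∧ IsWalkFrom E v u q ∧
      walkWeight c p + walkWeight c q = walkWeight c w := by
  obtain ⟨a, b, rfl⟩ := List.append_of_mem hv
  obtain ⟨h1, h2⟩ := split_walk hw
  exact ⟨a ++ [v], v :: b, h1, h2, (walkWeight_split c a v b).symm⟩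

end Helpers

theorem stmt17 {V : Type*} (E : Set (V × V)) (c : V → V → ℝ)
    (hnn : ∀ l : List V, IsClosedWalk E l → 0 ≤ walkWeight c l)
    (i j : V) (hij : (i, j) ∈ E) (hsim : Sim E c i j)
    (dij : ℝ) (hd : IsMinWalkWeight E c i j dij) (hc : c i j = dij) :
    ∀ l : List V, IsWalkFrom E i j l → walkWeight c l = dij →
      ∀ t ∈ l, Sim E c t i := by
  intro l hl hwl t ht
  rcases l with _ | ⟨v0, ls⟩
  · exact absurd rfl hl.1.1
  rcases ls with _ | ⟨v1, ls⟩
  · -- l is a single vertex, which must be i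
    have hv0 : v0 = i := by simpa using hl.2.1
    have ht' : t = i := by
      simp only [List.mem_singleton] at ht
      rw [ht, hv0]
    exact Or.inl ht'
  -- l has at least two vertices
  have hlen2 : 2 ≤ (v0 :: v1 :: ls).length := by simp
  -- obtain a walk p from j to i of weight ≤ -dij
  obtain ⟨p, hp, hpw⟩ : ∃ p, IsWalkFrom E j i p ∧ walkWeight c p ≤ -dij := by
    rcases hsim with heq | ⟨w0, hw0c, hw0z, hi0, hj0⟩
    · -- i = j : take the trivial walk [i]
      have hdij : dij ≤ 0 := by
        have h1 : IsWalkFrom E i j [i] := by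
          refine ⟨⟨by simp, List.isChain_singleton _⟩, rfl, ?_⟩
          simp [← heq]
        have := hd.2 [i] h1
        rwa [walkWeight_singleton] at this
      refine ⟨[i], ⟨⟨by simp, List.isChain_singleton _⟩, by simp [← heq], rfl⟩, ?_⟩
      rw [walkWeight_singleton]; linarith
    · -- zero-weight closed walk through i and j
      obtain ⟨⟨hw0ne, hw0ch⟩, hw0len, hw0hl⟩ := hw0c
      obtain ⟨x, s, rfl⟩ : ∃ x s, w0 = x :: s := by
        cases w0 with
        | nil => exact absurd rfl hw0ne
        | cons x s => exact ⟨x, s, rfl⟩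
      have hwx : IsWalkFrom E x x (x :: s) :=
        ⟨⟨hw0ne, hw0ch⟩, rfl, by rw [← hw0hl]; rfl⟩
      obtain ⟨w1, hw1, hw1w, hw1len, hw1mem⟩ := rotate_walk (c := c) hwx hj0
      obtain ⟨p, q, hp, hq, hpq⟩ := cut_walk (c := c) hw1 (hw1mem i hi0)
      refine ⟨p, hp, ?_⟩
      have hdq : dij ≤ walkWeight c q := hd.2 q hq
      rw [hw1w, hw0z] at hpq
      linarith
  -- build the closed walk l ++ p.tail
  obtain ⟨hC, hCw⟩ := concat_walk (c := c) hl hp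
  set C := (v0 :: v1 :: ls) ++ p.tail with hCdef
  have hClen : 2 ≤ C.length := by
    rw [hCdef]; rw [List.length_append]; simp; omega
  have hCclosed : IsClosedWalk E C := by
    refine ⟨hC.1, hClen, ?_⟩
    rw [hC.2.1, hC.2.2]
  have hCzero : walkWeight c C = 0 := by
    have h0 := hnn C hCclosed
    have h1 : walkWeight c C ≤ 0 := by
      rw [hCw, hwl]; linarith
    linarith
  refine Or.inr ⟨C, hCclosed, hCzero, ?_, ?_⟩
  · exact List.mem_append_left _ ht
  · exact List.mem_of_mem_head? (by rw [hC.2.1]; rfl)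
end
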